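/- arXiv:2202.04729 — 4 statements merged into one kernel-verified Lean document; each statement's English description precedes it below -/
import Mathlib

section
/- Let n, m ∈ ℕ and (κ,k) ∈ L_n. On the space C^m_{-1,(κ)}(0,∞), the m-fold sequential GFD coincides with the single GFD with kernel k^{<m>}: for every f ∈ C^m_{-1,(κ)}(0,∞) and t > 0, (D^{<m>}_{(k)} f)(t) = (d^{nm}/dt^{nm})(k^{<m>} * f)(t). -/
open MeasureTheory Set intervalIntegral


noncomputable section

/-- Laplace convolution `(f*g)(t) = ∫_0^t f(t-τ) g(τ) dτ`. -/
def conv (f g : ℝ → ℝ) : ℝ → ℝ := fun t => ∫ τ in (0:ℝ)..t, f (t - τ) * g τ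

/-- The space `C_{-1}(0,∞)`: functions of the form `t^q f₁(t)` with `q > -1`,
`f₁` continuous on `[0,∞)`. -/
def Cm1 (f : ℝ → ℝ) : Prop :=
  ∃ q : ℝ, -1 < q ∧ ∃ f₁ : ℝ → ℝ, ContinuousOn f₁ (Set.Ici 0) ∧
    ∀ t : ℝ, 0 < t → f t = t ^ q * f₁ t

/-- The subspace `C_{-1,0}(0,∞)`: as above with `-1 < q < 0`. -/
def Cm10 (f : ℝ → ℝ) : Prop :=
  ∃ q : ℝ, -1 < q ∧ q < 0 ∧ ∃ f₁ : ℝ → ℝ, ContinuousOn f₁ (Set.Ici 0) ∧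
    ∀ t : ℝ, 0 < t → f t = t ^ q * f₁ t

/-- `h_p(t) = t^(p-1)/Γ(p)`. -/
def hker (p : ℝ) : ℝ → ℝ := fun t => t ^ (p - 1) / Real.Gamma p

/-- The Sonine kernel class `L_n`: `κ ∈ C_{-1}`, `k ∈ C_{-1,0}`, and
`(κ*k)(t) = h_n(t)` for all `t > 0`. -/
def SonineL (n : ℕ) (κ k : ℝ → ℝ) : Prop :=
  Cm1 κ ∧ Cm10 k ∧ ∀ t : ℝ, 0 < t → conv κ k t = hker n t

/-- The general fractional integral `(I_{(κ)} f)(t) = (κ*f)(t)`. -/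
def GFI (κ f : ℝ → ℝ) : ℝ → ℝ := conv κ f

/-- The general fractional derivative of Riemann–Liouville type
`(D_{(k)} f)(t) = (d^n/dt^n)(k*f)(t)`. -/
def GFD (n : ℕ) (k f : ℝ → ℝ) : ℝ → ℝ := iteratedDeriv n (conv k f)

/-- Convolution powers: `g^{<1>} = g`, `g^{<j+1>} = g * g^{<j>}` (and `g^{<0>} = 1`). -/
def convPow (g : ℝ → ℝ) : ℕ → ℝ → ℝ
  | 0 => fun _ => 1
  | 1 => g
  | (j + 2) => conv g (convPow g (j + 1))

lemma conv_comm (f g : ℝ → ℝ) (t : ℝ) : conv f g t = conv g f t := by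
  unfold conv
  have h := intervalIntegral.integral_comp_sub_left (a := 0) (b := t)
    (fun τ => f (t - τ) * g τ) t
  simp only [sub_self, sub_zero] at h
  rw [← h]
  congr 1
  ext x
  simp only [sub_sub_cancel]
  ring

lemma ae_ne (t : ℝ) : ∀ᵐ x : ℝ, x ≠ t := by
  have : (volume : Measure ℝ) {t} = 0 := measure_singleton t
  simpa [ae_iff] using this

lemma bddOn {f₁ : ℝ → ℝ} (hf : ContinuousOn f₁ (Ici 0)) (T : ℝ) :
    ∃ M : ℝ, 0 ≤ M ∧ ∀ x ∈ Icc (0:ℝ) T, |f₁ x| ≤ M := by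
  rcases (isCompact_Icc (a := (0:ℝ)) (b := T)).exists_bound_of_continuousOn
      (hf.mono (Icc_subset_Ici_self)) with ⟨M, hM⟩
  exact ⟨max M 0, le_max_right _ _, fun x hx =>
    le_trans (by simpa [Real.norm_eq_abs] using hM x hx) (le_max_left _ _)⟩

lemma powInt {a : ℝ} (ha : -1 < a) {t : ℝ} (ht : 0 ≤ t) :
    IntegrableOn (fun x : ℝ => x ^ a) (Ioc 0 t) := by
  have h := intervalIntegrable_rpow' (a := 0) (b := t) ha
  rwa [intervalIntegrable_iff_integrableOn_Ioc_of_le ht] at h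

lemma reflInt {a : ℝ} (ha : -1 < a) {t : ℝ} (ht : 0 ≤ t) :
    IntegrableOn (fun τ : ℝ => (t - τ) ^ a) (Ioc 0 t) := by
  have h := (intervalIntegrable_rpow' (a := 0) (b := t) ha).comp_sub_left t
  simp only [sub_zero, sub_self] at h
  rw [← intervalIntegrable_iff_integrableOn_Ioc_of_le ht]
  exact h.symm

lemma cm1_contOn {f : ℝ → ℝ} (hf : Cm1 f) : ContinuousOn f (Ioi 0) := by
  obtain ⟨q, hq, f₁, hc, he⟩ := hf
  have h1 : ContinuousOn (fun x : ℝ => x ^ q * f₁ x) (Ioi 0) := by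
    apply ContinuousOn.mul
    · intro x hx
      exact (Real.continuousAt_rpow_const x q (Or.inl (ne_of_gt hx))).continuousWithinAt
    · exact hc.mono Ioi_subset_Ici_self
  exact h1.congr (fun x hx => he x hx)

lemma cm1_contAt {f : ℝ → ℝ} (hf : Cm1 f) {t : ℝ} (ht : 0 < t) : ContinuousAt f t :=
  (cm1_contOn hf).continuousAt (Ioi_mem_nhds ht)

lemma aesm_Ioc {f : ℝ → ℝ} {a b : ℝ} (h : ContinuousOn f (Ioo a b)) :
    AEStronglyMeasurable f (volume.restrict (Ioc a b)) := by
  rw [← Measure.restrict_congr_set Ioo_ae_eq_Ioc]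
  exact h.aestronglyMeasurable measurableSet_Ioo

lemma ae_Ioc_bound {P : ℝ → Prop} {a b : ℝ} (h : ∀ x ∈ Ioo a b, P x) :
    ∀ᵐ x ∂(volume.restrict (Ioc a b)), P x := by
  rw [← Measure.restrict_congr_set Ioo_ae_eq_Ioc]
  filter_upwards [ae_restrict_mem measurableSet_Ioo] using h


lemma cm1_pointbound {f : ℝ → ℝ} (hf : Cm1 f) (T : ℝ) :
    ∃ q : ℝ, -1 < q ∧ ∃ M : ℝ, 0 ≤ M ∧ ∀ x ∈ Ioc (0:ℝ) T, |f x| ≤ M * x ^ q := by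
  obtain ⟨q, hq, f₁, hc, he⟩ := hf
  obtain ⟨M, hM0, hM⟩ := bddOn hc T
  refine ⟨q, hq, M, hM0, fun x hx => ?_⟩
  rw [he x hx.1, abs_mul, abs_of_nonneg (Real.rpow_nonneg hx.1.le q), mul_comm M]
  exact mul_le_mul_of_nonneg_left (hM x ⟨hx.1.le, hx.2⟩) (Real.rpow_nonneg hx.1.le q)

lemma cm1_integrableOn {f : ℝ → ℝ} (hf : Cm1 f) {t : ℝ} (ht : 0 < t) :
    IntegrableOn f (Ioc 0 t) := by
  obtain ⟨q, hq, M, hM0, hM⟩ := cm1_pointbound hf t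
  refine Integrable.mono' ((powInt hq ht.le).const_mul M)
    (aesm_Ioc ((cm1_contOn hf).mono (fun x hx => hx.1)))
    (ae_Ioc_bound (fun x hx => ?_))
  exact hM x ⟨hx.1, hx.2.le⟩

lemma cm1_intervalIntegrable {f : ℝ → ℝ} (hf : Cm1 f) {t : ℝ} (ht : 0 < t) :
    IntervalIntegrable f volume 0 t := by
  rw [intervalIntegrable_iff_integrableOn_Ioc_of_le ht.le]
  exact cm1_integrableOn hf ht

lemma rpow_bddOnCompact {c d : ℝ} (a : ℝ) (hc : 0 < c) :
    ∃ M : ℝ, 0 ≤ M ∧ ∀ s ∈ Icc c d, s ^ a ≤ M := by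
  have hcont : ContinuousOn (fun s : ℝ => s ^ a) (Icc c d) := fun s hs =>
    (Real.continuousAt_rpow_const s a (Or.inl (ne_of_gt (lt_of_lt_of_le hc hs.1)))).continuousWithinAt
  rcases isCompact_Icc.exists_bound_of_continuousOn hcont with ⟨M, hM⟩
  refine ⟨max M 0, le_max_right _ _, fun s hs => ?_⟩
  calc s ^ a ≤ |s ^ a| := le_abs_self _
    _ ≤ M := by simpa [Real.norm_eq_abs] using hM s hs
    _ ≤ max M 0 := le_max_left _ _

lemma rpow_contOn_Ioo {a b e : ℝ} (h : 0 ≤ a) : ContinuousOn (fun s : ℝ => s ^ e) (Ioo a b) :=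
  fun s hs => (Real.continuousAt_rpow_const s e (Or.inl (ne_of_gt (lt_of_le_of_lt h hs.1)))).continuousWithinAt

lemma betaInt {a b : ℝ} (ha : -1 < a) (hb : -1 < b) {t : ℝ} (ht : 0 < t) :
    IntegrableOn (fun τ : ℝ => (t - τ) ^ a * τ ^ b) (Ioc 0 t) := by
  have h2 : (0:ℝ) < t / 2 := by linarith
  have hsplit : Ioc (0:ℝ) t = Ioc 0 (t/2) ∪ Ioc (t/2) t := by
    rw [Ioc_union_Ioc_eq_Ioc h2.le (by linarith)]
  rw [hsplit]
  apply IntegrableOn.union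
  · obtain ⟨M, hM0, hM⟩ := rpow_bddOnCompact (c := t/2) (d := t) a h2
    refine Integrable.mono' ((powInt hb h2.le).const_mul M)
      (aesm_Ioc ?_) (ae_Ioc_bound (fun τ hτ => ?_))
    · exact ContinuousOn.mul
        (fun τ hτ => ((Real.continuousAt_rpow_const (t - τ) a
            (Or.inl (ne_of_gt (by cases hτ with | intro h1 h2' => linarith)))).comp
          (continuous_const.sub continuous_id).continuousAt).continuousWithinAt)
        (rpow_contOn_Ioo le_rfl)
    · have h1 : (0:ℝ) < t - τ := by cases hτ with | intro h1 h2' => linarith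
      have h3 : t - τ ∈ Icc (t/2) t := ⟨by cases hτ with | intro h1 h2' => linarith,
        by cases hτ with | intro h1 h2' => linarith⟩
      rw [Real.norm_eq_abs, abs_mul, abs_of_nonneg (Real.rpow_nonneg h1.le a),
        abs_of_nonneg (Real.rpow_nonneg hτ.1.le b)]
      exact mul_le_mul_of_nonneg_right (hM _ h3) (Real.rpow_nonneg hτ.1.le b)
  · obtain ⟨M, hM0, hM⟩ := rpow_bddOnCompact (c := t/2) (d := t) b h2
    refine Integrable.mono'
      (((reflInt ha ht.le).mono_set (Ioc_subset_Ioc_left h2.le)).const_mul M)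
      (aesm_Ioc ?_) (ae_Ioc_bound (fun τ hτ => ?_))
    · exact ContinuousOn.mul
        (fun τ hτ => ((Real.continuousAt_rpow_const (t - τ) a
            (Or.inl (ne_of_gt (by cases hτ with | intro h1 h2' => linarith)))).comp
          (continuous_const.sub continuous_id).continuousAt).continuousWithinAt)
        ((rpow_contOn_Ioo (e := b) h2.le).mono (fun x hx => hx))
    · have h1 : (0:ℝ) < t - τ := by cases hτ with | intro h1 h2' => linarith
      have h0 : (0:ℝ) < τ := lt_trans h2 hτ.1
      rw [Real.norm_eq_abs, abs_mul, abs_of_nonneg (Real.rpow_nonneg h1.le a),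
        abs_of_nonneg (Real.rpow_nonneg h0.le b), mul_comm ((t - τ) ^ a)]
      exact mul_le_mul_of_nonneg_right (hM τ ⟨hτ.1.le, hτ.2.le⟩) (Real.rpow_nonneg h1.le a)

lemma conv_cm1 {f g : ℝ → ℝ} (hf : Cm1 f) (hg : Cm1 g) : Cm1 (conv f g) := by
  obtain ⟨a, ha, f₁, hf₁c, hf₁⟩ := hf
  obtain ⟨b, hb, g₁, hg₁c, hg₁⟩ := hg
  set H : ℝ → ℝ :=
    fun t => ∫ s in Ioc (0:ℝ) 1, (1-s)^a * s^b * (f₁ (t*(1-s)) * g₁ (t*s)) with hH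
  refine ⟨a+b+1, by linarith, H, ?_, ?_⟩
  · -- continuity of H on Ici 0
    intro t₀ ht₀
    simp only [mem_Ici] at ht₀
    have hT : (0:ℝ) < t₀ + 1 := by linarith
    obtain ⟨Mf, hMf0, hMf⟩ := bddOn hf₁c (t₀ + 1)
    obtain ⟨Mg, hMg0, hMg⟩ := bddOn hg₁c (t₀ + 1)
    have hIcc : ContinuousOn H (Icc 0 (t₀+1)) := by
      apply continuousOn_of_dominated (bound := fun s => (Mf*Mg) * ((1-s)^a * s^b))
      · intro t ht
        apply aesm_Ioc
        apply ContinuousOn.mul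
        · exact ContinuousOn.mul
            (fun s hs => ((Real.continuousAt_rpow_const (1 - s) a
                (Or.inl (ne_of_gt (by cases hs with | intro h1 h2 => linarith)))).comp
              (continuous_const.sub continuous_id).continuousAt).continuousWithinAt)
            (rpow_contOn_Ioo le_rfl)
        · apply ContinuousOn.mul
          · apply hf₁c.comp ((continuous_const.mul (continuous_const.sub continuous_id)).continuousOn)
            intro s hs
            exact mul_nonneg ht.1 (by cases hs with | intro h1 h2 => simp; linarith)
          · apply hg₁c.comp ((continuous_const.mul continuous_id).continuousOn)
            intro s hs
            exact mul_nonneg ht.1 hs.1.le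
      · intro t ht
        apply ae_Ioc_bound; intro s hs
        obtain ⟨hs0, hs1⟩ := hs
        have h1s : (0:ℝ) ≤ 1 - s := by linarith
        have hb1 : |f₁ (t*(1-s))| ≤ Mf := hMf _ ⟨mul_nonneg ht.1 h1s,
          by nlinarith [ht.2]⟩
        have hb2 : |g₁ (t*s)| ≤ Mg := hMg _ ⟨mul_nonneg ht.1 hs0.le,
          by nlinarith [ht.2]⟩
        rw [Real.norm_eq_abs, abs_mul, abs_mul,
          abs_of_nonneg (Real.rpow_nonneg h1s a), abs_of_nonneg (Real.rpow_nonneg hs0.le b),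
          abs_mul]
        calc (1-s)^a * s^b * (|f₁ (t*(1-s))| * |g₁ (t*s)|)
            ≤ (1-s)^a * s^b * (Mf * Mg) := by
              apply mul_le_mul_of_nonneg_left _ (mul_nonneg (Real.rpow_nonneg h1s a) (Real.rpow_nonneg hs0.le b))
              exact mul_le_mul hb1 hb2 (abs_nonneg _) hMf0
          _ = Mf * Mg * ((1-s)^a * s^b) := by ring
      · exact ((betaInt ha hb one_pos).const_mul _)
      · apply ae_Ioc_bound; intro s hs
        obtain ⟨hs0, hs1⟩ := hs
        apply ContinuousOn.mul continuousOn_const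
        apply ContinuousOn.mul
        · apply hf₁c.comp ((continuous_id.mul continuous_const).continuousOn)
          intro t ht; exact mul_nonneg ht.1 (by linarith)
        · apply hg₁c.comp ((continuous_id.mul continuous_const).continuousOn)
          intro t ht; exact mul_nonneg ht.1 hs0.le
    refine (hIcc t₀ ⟨ht₀, by linarith⟩).mono_of_mem_nhdsWithin ?_
    rw [mem_nhdsWithin]
    exact ⟨Iio (t₀+1), isOpen_Iio, by simp, fun x hx => ⟨hx.2, le_of_lt hx.1⟩⟩
  · -- representation
    intro t ht
    have stepA : conv f g t
        = ∫ τ in (0:ℝ)..t, ((t-τ)^a * f₁ (t-τ)) * (τ^b * g₁ τ) := by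
      apply intervalIntegral.integral_congr_ae
      filter_upwards [ae_ne t] with τ hτne hτmem
      rw [uIoc_of_le ht.le] at hτmem
      have hτt : τ < t := lt_of_le_of_ne hτmem.2 hτne
      rw [hf₁ _ (by linarith), hg₁ _ hτmem.1]
    have hsub := integral_comp_mul_right (a := (0:ℝ)) (b := 1)
      (fun τ => ((t-τ)^a * f₁ (t-τ)) * (τ^b * g₁ τ)) (ne_of_gt ht)
    simp only [zero_mul, one_mul, smul_eq_mul] at hsub
    have stepB : conv f g t
        = t * ∫ s in (0:ℝ)..1, ((t-s*t)^a * f₁ (t-s*t)) * ((s*t)^b * g₁ (s*t)) := by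
      rw [stepA, hsub]
      field_simp
    have stepC : ∀ s ∈ uIcc (0:ℝ) 1,
        ((t-s*t)^a * f₁ (t-s*t)) * ((s*t)^b * g₁ (s*t))
        = (t^a * t^b) * ((1-s)^a * s^b * (f₁ (t*(1-s)) * g₁ (t*s))) := by
      intro s hs
      rw [uIcc_of_le zero_le_one] at hs
      obtain ⟨hs0, hs1⟩ := hs
      have e1 : t - s*t = t*(1-s) := by ring
      have e2 : s*t = t*s := mul_comm s t
      rw [e1, e2, Real.mul_rpow ht.le (by linarith), Real.mul_rpow ht.le hs0]
      ring
    have stepD : conv f g t = t * ((t^a * t^b) *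
        ∫ s in (0:ℝ)..1, (1-s)^a * s^b * (f₁ (t*(1-s)) * g₁ (t*s))) := by
      rw [stepB, intervalIntegral.integral_congr stepC, intervalIntegral.integral_const_mul]
    rw [stepD]
    have hHi : H t = ∫ s in (0:ℝ)..1, (1-s)^a * s^b * (f₁ (t*(1-s)) * g₁ (t*s)) :=
      (intervalIntegral.integral_of_le zero_le_one).symm
    rw [← hHi, Real.rpow_add ht, Real.rpow_add ht, Real.rpow_one]
    ring

/-- The integrand of the double-integral representation of `(f*g)*h`. -/
def Wfun (f g h : ℝ → ℝ) (t τ σ : ℝ) : ℝ :=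
  if 0 < τ ∧ 0 < σ ∧ τ + σ ≤ t then f (t - τ - σ) * g σ * h τ else 0

lemma Wfun_pos {f g h : ℝ → ℝ} {t τ σ : ℝ} (hc : 0 < τ ∧ 0 < σ ∧ τ + σ ≤ t) :
    Wfun f g h t τ σ = f (t - τ - σ) * g σ * h τ := if_pos hc

lemma Wfun_neg {f g h : ℝ → ℝ} {t τ σ : ℝ} (hc : ¬(0 < τ ∧ 0 < σ ∧ τ + σ ≤ t)) :
    Wfun f g h t τ σ = 0 := if_neg hc

lemma uncurry_Wfun (f g h : ℝ → ℝ) (t : ℝ) (p : ℝ × ℝ) :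
    Function.uncurry (Wfun f g h t) p = Wfun f g h t p.1 p.2 := rfl

lemma pow_cm1 {a : ℝ} (ha : -1 < a) : Cm1 (fun x : ℝ => x ^ a) :=
  ⟨a, ha, fun _ => 1, continuousOn_const, fun t _ => by simp⟩

lemma conv_conv_repr (f g h : ℝ → ℝ) {t : ℝ} (ht : 0 < t) :
    conv (conv f g) h t = ∫ τ : ℝ, ∫ σ : ℝ, Wfun f g h t τ σ := by
  have step1 : conv (conv f g) h t = ∫ τ in Ioc (0:ℝ) t, conv f g (t - τ) * h τ :=
    intervalIntegral.integral_of_le ht.le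
  have step2 : ∀ τ ∈ Ioc (0:ℝ) t, conv f g (t - τ) * h τ = ∫ σ : ℝ, Wfun f g h t τ σ := by
    intro τ hτ
    have h0 : (0:ℝ) ≤ t - τ := by linarith [hτ.2]
    have e1 : conv f g (t - τ) = ∫ σ in Ioc (0:ℝ) (t - τ), f (t - τ - σ) * g σ :=
      intervalIntegral.integral_of_le h0
    have e2 : conv f g (t - τ) * h τ
        = ∫ σ in Ioc (0:ℝ) (t - τ), f (t - τ - σ) * g σ * h τ := by
      rw [e1, ← MeasureTheory.integral_mul_const]
    rw [e2, ← MeasureTheory.integral_indicator measurableSet_Ioc]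
    congr 1
    funext σ
    rw [Set.indicator_apply]
    by_cases hσ : σ ∈ Ioc (0:ℝ) (t - τ)
    · rw [if_pos hσ, Wfun_pos ⟨hτ.1, hσ.1, by linarith [hσ.2]⟩]
    · rw [if_neg hσ, Wfun_neg (fun hcon => hσ ⟨hcon.2.1, by linarith [hcon.2.2]⟩)]
  rw [step1, MeasureTheory.setIntegral_congr_fun measurableSet_Ioc step2]
  apply setIntegral_eq_integral_of_forall_compl_eq_zero
  intro τ hτ
  have : ∀ σ : ℝ, Wfun f g h t τ σ = 0 := by
    intro σ
    rw [Wfun_neg]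
    rintro ⟨h1, h2, h3⟩
    exact hτ ⟨h1, by linarith⟩
  simp [this]

set_option maxHeartbeats 2000000 in
lemma W_integrable {f g h : ℝ → ℝ} (hf : Cm1 f) (hg : Cm1 g) (hh : Cm1 h)
    {t : ℝ} (ht : 0 < t) :
    Integrable (Function.uncurry (Wfun f g h t)) ((volume : Measure ℝ).prod volume) := by
  obtain ⟨qa, hqa, Mf, hMf0, hMf⟩ := cm1_pointbound hf t
  obtain ⟨qb, hqb, Mg, hMg0, hMg⟩ := cm1_pointbound hg t
  obtain ⟨qc, hqc, Mh, hMh0, hMh⟩ := cm1_pointbound hh t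
  set T : Set (ℝ × ℝ) := {p | 0 < p.1 ∧ 0 < p.2 ∧ p.1 + p.2 < t} with hT
  have hTopen : IsOpen T := by
    apply IsOpen.inter (isOpen_lt continuous_const continuous_fst)
    exact IsOpen.inter (isOpen_lt continuous_const continuous_snd)
      (isOpen_lt (continuous_fst.add continuous_snd) continuous_const)
  have hTmeas : MeasurableSet T := hTopen.measurableSet
  set G : ℝ × ℝ → ℝ :=
    T.indicator (fun p => (t - p.1 - p.2) ^ qa * p.2 ^ qb * p.1 ^ qc) with hG
  have hGmeas : AEStronglyMeasurable G ((volume : Measure ℝ).prod volume) := by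
    apply Measurable.aestronglyMeasurable
    apply Measurable.indicator _ hTmeas
    have m1 : Measurable fun x : ℝ => x ^ qa := by measurability
    have m2 : Measurable fun x : ℝ => x ^ qb := by measurability
    have m3 : Measurable fun x : ℝ => x ^ qc := by measurability
    exact ((m1.comp ((measurable_const.sub measurable_fst).sub measurable_snd)).mul
      (m2.comp measurable_snd)).mul (m3.comp measurable_fst)
  have hGnonneg : ∀ p, 0 ≤ G p := by
    intro p
    apply Set.indicator_nonneg
    rintro p ⟨h1, h2, h3⟩
    exact mul_nonneg (mul_nonneg (Real.rpow_nonneg (by linarith) qa)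
      (Real.rpow_nonneg h2.le qb)) (Real.rpow_nonneg h1.le qc)
  -- sections of G
  have hsec : ∀ τ : ℝ, τ ∈ Ioo 0 t → (fun σ => G (τ, σ))
      = (Ioo (0:ℝ) (t - τ)).indicator (fun σ => (t - τ - σ) ^ qa * σ ^ qb * τ ^ qc) := by
    intro τ hτ
    funext σ
    rw [hG, Set.indicator_apply, Set.indicator_apply]
    by_cases hσ : σ ∈ Ioo (0:ℝ) (t - τ)
    · rw [if_pos hσ, if_pos (show (τ, σ) ∈ T from ⟨hτ.1, hσ.1, by linarith [hσ.2]⟩)]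
    · rw [if_neg hσ, if_neg (fun hcon => hσ ⟨hcon.2.1, by linarith [hcon.2.2]⟩)]
  have hsec0 : ∀ τ : ℝ, τ ∉ Ioo 0 t → (fun σ => G (τ, σ)) = fun _ => 0 := by
    intro τ hτ
    funext σ
    rw [hG, Set.indicator_of_notMem]
    rintro ⟨h1, h2, h3⟩
    exact hτ ⟨h1, by linarith⟩
  have hGint : Integrable G ((volume : Measure ℝ).prod volume) := by
    rw [MeasureTheory.integrable_prod_iff hGmeas]
    constructor
    · apply Filter.Eventually.of_forall
      intro τ
      by_cases hτ : τ ∈ Ioo 0 t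
      · rw [hsec τ hτ]
        rw [integrable_indicator_iff measurableSet_Ioo]
        exact IntegrableOn.mono_set ((betaInt hqa hqb
          (by linarith [hτ.2] : (0:ℝ) < t - τ)).mul_const (τ ^ qc)) Ioo_subset_Ioc_self
      · rw [hsec0 τ hτ]
        exact integrable_zero _ _ _
    · -- integrability of τ ↦ ∫ σ, ‖G (τ, σ)‖
      have hBcm1 : Cm1 (conv (fun x : ℝ => x ^ qa) (fun x : ℝ => x ^ qb)) :=
        conv_cm1 (pow_cm1 hqa) (pow_cm1 hqb)
      obtain ⟨Q, hQ, MB, hMB0, hMB⟩ := cm1_pointbound hBcm1 t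
      apply Integrable.mono'
        (g := (Ioc (0:ℝ) t).indicator (fun τ => MB * ((t - τ) ^ Q * τ ^ qc)))
      · rw [integrable_indicator_iff measurableSet_Ioc]
        exact (betaInt hQ hqc ht).const_mul MB
      · exact hGmeas.norm.integral_prod_right'
      · apply Filter.Eventually.of_forall
        intro τ
        by_cases hτ : τ ∈ Ioo 0 t
        · have htτ : (0:ℝ) < t - τ := by linarith [hτ.2]
          have e1 : (∫ σ : ℝ, ‖G (τ, σ)‖) = ∫ σ : ℝ, G (τ, σ) := by
            congr 1; funext σ; exact Real.norm_of_nonneg (hGnonneg _)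
          have e2 : (∫ σ : ℝ, G (τ, σ))
              = ∫ σ in Ioo (0:ℝ) (t - τ), (t - τ - σ) ^ qa * σ ^ qb * τ ^ qc := by
            rw [hsec τ hτ, MeasureTheory.integral_indicator measurableSet_Ioo]
          have e3 : (∫ σ in Ioo (0:ℝ) (t - τ), (t - τ - σ) ^ qa * σ ^ qb * τ ^ qc)
              = (∫ σ in Ioo (0:ℝ) (t - τ), (t - τ - σ) ^ qa * σ ^ qb) * τ ^ qc :=
            integral_mul_const _ _
          have e4 : (∫ σ in Ioo (0:ℝ) (t - τ), (t - τ - σ) ^ qa * σ ^ qb)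
              = conv (fun x : ℝ => x ^ qa) (fun x : ℝ => x ^ qb) (t - τ) := by
            rw [MeasureTheory.setIntegral_congr_set Ioo_ae_eq_Ioc]
            exact (intervalIntegral.integral_of_le htτ.le).symm
          have hbnd := hMB (t - τ) ⟨htτ, by linarith [hτ.1]⟩
          have eI : (Ioc (0:ℝ) t).indicator (fun τ => MB * ((t - τ) ^ Q * τ ^ qc)) τ
              = MB * ((t - τ) ^ Q * τ ^ qc) :=
            Set.indicator_of_mem (show τ ∈ Ioc (0:ℝ) t from ⟨hτ.1, hτ.2.le⟩) _
          rw [Real.norm_eq_abs, e1, e2, e3, e4, eI]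
          have hτqc : (0:ℝ) ≤ τ ^ qc := Real.rpow_nonneg hτ.1.le qc
          calc |conv (fun x : ℝ => x ^ qa) (fun x : ℝ => x ^ qb) (t - τ) * τ ^ qc|
              = |conv (fun x : ℝ => x ^ qa) (fun x : ℝ => x ^ qb) (t - τ)| * τ ^ qc := by
                rw [abs_mul, abs_of_nonneg hτqc]
            _ ≤ MB * (t - τ) ^ Q * τ ^ qc := mul_le_mul_of_nonneg_right hbnd hτqc
            _ = MB * ((t - τ) ^ Q * τ ^ qc) := by ring
        · have hz : ∀ y : ℝ, G (τ, y) = 0 := fun y => congrFun (hsec0 τ hτ) y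
          simp only [hz, norm_zero, MeasureTheory.integral_zero]
          apply Set.indicator_nonneg
          intro x hx
          have h1 : (0:ℝ) ≤ t - x := by linarith [hx.2]
          exact mul_nonneg hMB0 (mul_nonneg (Real.rpow_nonneg h1 Q)
            (Real.rpow_nonneg hx.1.le qc))
  -- now dominate W by (Mf*Mg*Mh) • G
  set Z : Set (ℝ × ℝ) := {p | p.1 + p.2 = t} with hZdef
  have hZmeas : MeasurableSet Z :=
    (isClosed_eq (continuous_fst.add continuous_snd) continuous_const).measurableSet
  have hZ0 : ((volume : Measure ℝ).prod volume) Z = 0 := by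
    rw [MeasureTheory.Measure.measure_prod_null hZmeas]
    refine Filter.Eventually.of_forall (fun τ => ?_)
    show (volume : Measure ℝ) (Prod.mk τ ⁻¹' Z) = 0
    have : Prod.mk τ ⁻¹' Z = {t - τ} := by
      ext σ
      simp only [hZdef, Set.mem_preimage, Set.mem_setOf_eq, Set.mem_singleton_iff]
      constructor <;> intro h <;> linarith
    rw [this]
    exact measure_singleton _
  have hZae : ∀ᵐ p ∂((volume : Measure ℝ).prod volume), p ∉ Z :=
    MeasureTheory.compl_mem_ae_iff.mpr hZ0
  have hWmeas : AEStronglyMeasurable (Function.uncurry (Wfun f g h t))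
      ((volume : Measure ℝ).prod volume) := by
    set Ftil : ℝ × ℝ → ℝ := fun p => f (t - p.1 - p.2) * g p.2 * h p.1 with hFtil
    have hcont : ContinuousOn Ftil T := by
      intro p hp
      obtain ⟨h1, h2, h3⟩ := hp
      apply ContinuousAt.continuousWithinAt
      have hc1 : ContinuousAt (fun p : ℝ × ℝ => t - p.1 - p.2) p :=
        ((continuous_const.sub continuous_fst).sub continuous_snd).continuousAt
      have hc2 : ContinuousAt (fun p : ℝ × ℝ => f (t - p.1 - p.2)) p :=
        ContinuousAt.comp (cm1_contAt hf (by linarith : (0:ℝ) < t - p.1 - p.2)) hc1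
      have hc3 : ContinuousAt (fun p : ℝ × ℝ => g p.2) p :=
        ContinuousAt.comp (cm1_contAt hg h2) continuous_snd.continuousAt
      have hc4 : ContinuousAt (fun p : ℝ × ℝ => h p.1) p :=
        ContinuousAt.comp (cm1_contAt hh h1) continuous_fst.continuousAt
      exact (hc2.mul hc3).mul hc4
    have hind : AEStronglyMeasurable (T.indicator Ftil)
        ((volume : Measure ℝ).prod volume) :=
      (aestronglyMeasurable_indicator_iff hTmeas).mpr
        (hcont.aestronglyMeasurable hTmeas)
    apply hind.congr
    filter_upwards [hZae] with p hpZ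
    by_cases hp : p ∈ T
    · obtain ⟨h1, h2, h3⟩ := id hp
      rw [Set.indicator_of_mem hp, uncurry_Wfun, Wfun_pos ⟨h1, h2, h3.le⟩]
    · rw [Set.indicator_of_notMem hp, uncurry_Wfun, Wfun_neg]
      rintro ⟨h1, h2, h3⟩
      apply hp
      exact ⟨h1, h2, lt_of_le_of_ne h3 (fun he => hpZ he)⟩
  apply Integrable.mono' (hGint.const_mul (Mf * Mg * Mh)) hWmeas
  filter_upwards [hZae] with p hpZ
  by_cases hp : p ∈ T
  · obtain ⟨h1, h2, h3⟩ := id hp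
    have eW : Function.uncurry (Wfun f g h t) p = f (t - p.1 - p.2) * g p.2 * h p.1 := by
      rw [uncurry_Wfun, Wfun_pos ⟨h1, h2, h3.le⟩]
    have eG : G p = (t - p.1 - p.2) ^ qa * p.2 ^ qb * p.1 ^ qc := by
      rw [hG, Set.indicator_of_mem hp]
    rw [eW, eG]
    have ha1 : t - p.1 - p.2 ∈ Ioc (0:ℝ) t := ⟨by linarith, by linarith⟩
    have ha2 : p.2 ∈ Ioc (0:ℝ) t := ⟨h2, by linarith⟩
    have ha3 : p.1 ∈ Ioc (0:ℝ) t := ⟨h1, by linarith⟩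
    have nn1 : (0:ℝ) ≤ Mf * (t - p.1 - p.2) ^ qa :=
      mul_nonneg hMf0 (Real.rpow_nonneg (by linarith) qa)
    have nn2 : (0:ℝ) ≤ Mg * p.2 ^ qb := mul_nonneg hMg0 (Real.rpow_nonneg h2.le qb)
    rw [Real.norm_eq_abs, abs_mul, abs_mul]
    calc |f (t - p.1 - p.2)| * |g p.2| * |h p.1|
        ≤ (Mf * (t - p.1 - p.2) ^ qa) * (Mg * p.2 ^ qb) * (Mh * p.1 ^ qc) := by
          apply mul_le_mul _ (hMh _ ha3) (abs_nonneg _) (mul_nonneg nn1 nn2)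
          exact mul_le_mul (hMf _ ha1) (hMg _ ha2) (abs_nonneg _) nn1
      _ = Mf * Mg * Mh * ((t - p.1 - p.2) ^ qa * p.2 ^ qb * p.1 ^ qc) := by ring
  · have eW : Function.uncurry (Wfun f g h t) p = 0 := by
      rw [uncurry_Wfun, Wfun_neg]
      rintro ⟨h1, h2, h3⟩
      exact hp ⟨h1, h2, lt_of_le_of_ne h3 (fun he => hpZ he)⟩
    rw [eW, norm_zero]
    exact mul_nonneg (mul_nonneg (mul_nonneg hMf0 hMg0) hMh0) (hGnonneg p)

lemma conv_exchange {f g h : ℝ → ℝ} (hf : Cm1 f) (hg : Cm1 g) (hh : Cm1 h)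
    {t : ℝ} (ht : 0 < t) :
    conv (conv f g) h t = conv (conv f h) g t := by
  rw [conv_conv_repr f g h ht, conv_conv_repr f h g ht]
  rw [MeasureTheory.integral_integral_swap (W_integrable hf hg hh ht)]
  have hWsym : ∀ x y : ℝ, Wfun f g h t x y = Wfun f h g t y x := by
    intro x y
    by_cases hc : 0 < x ∧ 0 < y ∧ x + y ≤ t
    · rw [Wfun_pos hc, Wfun_pos ⟨hc.2.1, hc.1, by linarith [hc.2.2]⟩,
        show t - x - y = t - y - x by ring]
      ring
    · rw [Wfun_neg hc, Wfun_neg (fun hc' => hc ⟨hc'.2.1, hc'.1, by linarith [hc'.2.2]⟩)]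
  simp only [hWsym]

lemma conv_assoc' {f g h : ℝ → ℝ} (hf : Cm1 f) (hg : Cm1 g) (hh : Cm1 h)
    {t : ℝ} (ht : 0 < t) :
    conv (conv f g) h t = conv f (conv g h) t := by
  have e1 : conv f (conv g h) t = conv (conv g h) f t := conv_comm _ _ _
  have e2 : conv (conv g h) f t = conv (conv g f) h t := conv_exchange hg hh hf ht
  have e3 : conv g f = conv f g := funext (fun x => conv_comm g f x)
  rw [e1, e2, e3]

lemma iteratedDeriv_congr_Ioi (j : ℕ) :
    ∀ {F G : ℝ → ℝ}, (∀ x > (0:ℝ), F x = G x) →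
    ∀ t > (0:ℝ), iteratedDeriv j F t = iteratedDeriv j G t := by
  induction j with
  | zero => intro F G h t ht; simpa [iteratedDeriv_zero] using h t ht
  | succ j ih =>
    intro F G h t ht
    rw [iteratedDeriv_succ', iteratedDeriv_succ']
    refine ih (fun x hx => ?_) t ht
    have hev : F =ᶠ[nhds x] G := by
      filter_upwards [Ioi_mem_nhds hx] using fun y hy => h y hy
    exact hev.deriv_eq

lemma conv_congr_right (k : ℝ → ℝ) {F G : ℝ → ℝ} (h : ∀ x > (0:ℝ), F x = G x)
    {t : ℝ} (ht : 0 < t) : conv k F t = conv k G t := by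
  apply intervalIntegral.integral_congr_ae
  apply Filter.Eventually.of_forall
  intro x hx
  rw [uIoc_of_le ht.le] at hx
  rw [h x hx.1]

lemma conv_congr_left {F G : ℝ → ℝ} (h : ∀ x > (0:ℝ), F x = G x) (g : ℝ → ℝ)
    {t : ℝ} (ht : 0 < t) : conv F g t = conv G g t := by
  apply intervalIntegral.integral_congr_ae
  filter_upwards [ae_ne t] with x hne hx
  rw [uIoc_of_le ht.le] at hx
  have hxt : x < t := lt_of_le_of_ne hx.2 hne
  rw [h (t - x) (by linarith)]

lemma deriv_convh1 {ψ : ℝ → ℝ} (hψ : Cm1 ψ) {t : ℝ} (ht : 0 < t) :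
    HasDerivAt (fun s => ∫ x in (0:ℝ)..s, ψ x) (ψ t) t := by
  apply intervalIntegral.integral_hasDerivAt_right (cm1_intervalIntegrable hψ ht)
  · exact ⟨Ioi 0, Ioi_mem_nhds ht, (cm1_contOn hψ).aestronglyMeasurable measurableSet_Ioi⟩
  · exact cm1_contAt hψ ht

lemma hker_one : hker 1 = fun _ : ℝ => 1 := by
  funext t; simp [hker, Real.Gamma_one]

lemma hker_cm1 {p : ℝ} (hp : 0 < p) : Cm1 (hker p) :=
  ⟨p - 1, by linarith, fun _ => 1 / Real.Gamma p, continuousOn_const,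
    fun t _ => by rw [hker]; ring⟩

lemma hker_cm1_nat {j : ℕ} (hj : 1 ≤ j) : Cm1 (hker j) :=
  hker_cm1 (by exact_mod_cast Nat.lt_of_lt_of_le Nat.zero_lt_one hj)

lemma conv_hker_one (g : ℝ → ℝ) (t : ℝ) : conv (hker 1) g t = ∫ x in (0:ℝ)..t, g x := by
  unfold conv
  rw [hker_one]
  simp

lemma conv_hker_one_hker {j : ℕ} (hj : 1 ≤ j) {t : ℝ} (ht : 0 < t) :
    conv (hker 1) (hker j) t = hker (↑(j + 1)) t := by
  rw [conv_hker_one]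
  unfold hker
  have hj0 : (0:ℝ) < (j:ℝ) := by exact_mod_cast hj
  have hΓ : Real.Gamma (j:ℝ) ≠ 0 := ne_of_gt (Real.Gamma_pos_of_pos hj0)
  rw [intervalIntegral.integral_div]
  rw [integral_rpow (Or.inl (by linarith : (-1:ℝ) < (j:ℝ) - 1))]
  rw [Real.zero_rpow (by linarith : (j:ℝ) - 1 + 1 ≠ 0)]
  have hΓ1 : Real.Gamma ((j:ℝ) + 1) = (j:ℝ) * Real.Gamma (j:ℝ) :=
    Real.Gamma_add_one (ne_of_gt hj0)
  push_cast
  rw [hΓ1]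
  have : (j:ℝ) - 1 + 1 = (j:ℝ) := by ring
  rw [this]
  have : (j:ℝ) + 1 - 1 = (j:ℝ) := by ring
  rw [this]
  field_simp
  ring

lemma conv_hker_add {a : ℕ} (ha : 1 ≤ a) : ∀ {b : ℕ}, 1 ≤ b → ∀ t > (0:ℝ),
    conv (hker a) (hker b) t = hker (↑(a + b)) t := by
  induction a, ha using Nat.le_induction with
  | base =>
    intro b hb t ht
    rw [show ((1:ℕ):ℝ) = (1:ℝ) by norm_num, conv_hker_one_hker hb ht,
      show b + 1 = 1 + b by ring]
  | succ a ha ih =>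
    intro b hb t ht
    have e1 : conv (hker ↑(a+1)) (hker b) t = conv (conv (hker 1) (hker a)) (hker b) t :=
      conv_congr_left (fun x hx => (conv_hker_one_hker ha hx).symm) _ ht
    have e2 : conv (conv (hker 1) (hker a)) (hker b) t
        = conv (hker 1) (conv (hker a) (hker b)) t :=
      conv_assoc' (hker_cm1 one_pos) (hker_cm1_nat ha) (hker_cm1_nat hb) ht
    have e3 : conv (hker 1) (conv (hker a) (hker b)) t
        = conv (hker 1) (hker ↑(a+b)) t :=
      conv_congr_right _ (fun x hx => ih hb x hx) ht
    have e4 : conv (hker 1) (hker ↑(a+b)) t = hker (↑(a+b+1)) t :=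
      conv_hker_one_hker (by omega) ht
    rw [e1, e2, e3, e4, show a + b + 1 = a + 1 + b by ring]

lemma iteratedDeriv_conv_hker {ψ : ℝ → ℝ} (hψ : Cm1 ψ) {j : ℕ} (hj : 1 ≤ j) :
    ∀ t > (0:ℝ), iteratedDeriv j (conv (hker j) ψ) t = ψ t := by
  induction j, hj using Nat.le_induction with
  | base =>
    intro t ht
    rw [iteratedDeriv_one]
    rw [show conv (hker ↑(1:ℕ)) ψ = fun s => ∫ x in (0:ℝ)..s, ψ x from
      funext (fun s => by rw [show ((1:ℕ):ℝ) = (1:ℝ) by norm_num, conv_hker_one])]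
    exact (deriv_convh1 hψ ht).deriv
  | succ j hj ih =>
    intro t ht
    have hrep : ∀ x > (0:ℝ), conv (hker ↑(j+1)) ψ x
        = conv (hker 1) (conv (hker j) ψ) x := by
      intro x hx
      have e1 : conv (hker ↑(j+1)) ψ x = conv (conv (hker 1) (hker j)) ψ x :=
        conv_congr_left (fun y hy => (conv_hker_one_hker hj hy).symm) ψ hx
      rw [e1]
      exact conv_assoc' (hker_cm1 one_pos) (hker_cm1_nat hj) hψ hx
    rw [iteratedDeriv_congr_Ioi (j+1) hrep t ht, iteratedDeriv_succ']
    have hX : Cm1 (conv (hker j) ψ) := conv_cm1 (hker_cm1_nat hj) hψ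
    have hder : ∀ x > (0:ℝ), deriv (conv (hker 1) (conv (hker j) ψ)) x
        = conv (hker j) ψ x := by
      intro x hx
      rw [show conv (hker 1) (conv (hker j) ψ)
          = fun s => ∫ u in (0:ℝ)..s, conv (hker j) ψ u from funext (conv_hker_one _)]
      exact (deriv_convh1 hX hx).deriv
    exact (iteratedDeriv_congr_Ioi j hder t ht).trans (ih t ht)


def psiChain (κ φ : ℝ → ℝ) : ℕ → ℝ → ℝ
  | 0 => φ
  | (i+1) => conv (convPow κ (i+1)) φ

lemma psiChain_pos (κ φ : ℝ → ℝ) {i : ℕ} (hi : 1 ≤ i) :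
    psiChain κ φ i = conv (convPow κ i) φ := by
  cases i with
  | zero => omega
  | succ i => rfl

lemma convPow_one (g : ℝ → ℝ) : convPow g 1 = g := rfl

lemma convPow_succ' (g : ℝ → ℝ) {j : ℕ} (hj : 1 ≤ j) :
    convPow g (j+1) = conv g (convPow g j) := by
  cases j with
  | zero => omega
  | succ i => rfl

/-- on `C^m_{-1,(κ)}(0,∞)` the `m`-fold sequential GFD coincides
with the single GFD with kernel `k^{<m>}`:
`(D^{<m>}_{(k)} f)(t) = (d^{nm}/dt^{nm})(k^{<m>} * f)(t)`. -/
theorem seq_GFD_eq_GFD_convPow_kernel (n m : ℕ) (hn : 0 < n) (hm : 0 < m)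
    (κ k : ℝ → ℝ) (hκk : SonineL n κ k) (f φ : ℝ → ℝ) (hφ : Cm1 φ)
    (hf : ∀ t : ℝ, 0 < t → f t = conv (convPow κ m) φ t) :
    ∀ t : ℝ, 0 < t →
      (GFD n k)^[m] f t = iteratedDeriv (n * m) (conv (convPow k m) f) t := by
  obtain ⟨hκ, hk10, hson⟩ := hκk
  have hk : Cm1 k := by
    obtain ⟨q, h1, _, rest⟩ := hk10
    exact ⟨q, h1, rest⟩
  have hn1 : 1 ≤ n := hn
  have hkκ : ∀ x > (0:ℝ), conv k κ x = hker n x := fun x hx =>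
    (conv_comm k κ x).trans (hson x hx)
  have convPowCm1 : ∀ (g : ℝ → ℝ), Cm1 g → ∀ j : ℕ, 1 ≤ j → Cm1 (convPow g j) := by
    intro g hg j hj
    induction j, hj using Nat.le_induction with
    | base => exact hg
    | succ j hj ih => rw [convPow_succ' g hj]; exact conv_cm1 hg ih
  have hΨcm1 : ∀ i, Cm1 (psiChain κ φ i) := by
    intro i
    cases i with
    | zero => exact hφ
    | succ i =>
      rw [psiChain_pos κ φ (by omega)]
      exact conv_cm1 (convPowCm1 κ hκ _ (by omega)) hφ
  have hΨstep : ∀ i : ℕ, ∀ t > (0:ℝ), psiChain κ φ (i+1) t = conv κ (psiChain κ φ i) t := by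
    intro i t ht
    cases i with
    | zero =>
      rw [psiChain_pos κ φ le_rfl, convPow_one]
      rfl
    | succ i =>
      rw [psiChain_pos κ φ (show 1 ≤ i+1+1 by omega), psiChain_pos κ φ (show 1 ≤ i+1 by omega),
        convPow_succ' κ (show 1 ≤ i+1 by omega)]
      exact conv_assoc' hκ (convPowCm1 κ hκ (i+1) (by omega)) hφ ht
  have gfd_step : ∀ (ψ : ℝ → ℝ), Cm1 ψ → ∀ t > (0:ℝ), GFD n k (conv κ ψ) t = ψ t := by
    intro ψ hψ t ht
    have hrep : ∀ x > (0:ℝ), conv k (conv κ ψ) x = conv (hker n) ψ x := by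
      intro x hx
      rw [← conv_assoc' hk hκ hψ hx]
      exact conv_congr_left hkκ ψ hx
    show iteratedDeriv n (conv k (conv κ ψ)) t = ψ t
    rw [iteratedDeriv_congr_Ioi n hrep t ht]
    exact iteratedDeriv_conv_hker hψ hn1 t ht
  have gfd_congr : ∀ {F G : ℝ → ℝ}, (∀ x > (0:ℝ), F x = G x) →
      ∀ t > (0:ℝ), GFD n k F t = GFD n k G t := by
    intro F G h t ht
    exact iteratedDeriv_congr_Ioi n (fun x hx => conv_congr_right k h hx) t ht
  have left : ∀ j : ℕ, j ≤ m → ∀ t > (0:ℝ), (GFD n k)^[j] f t = psiChain κ φ (m - j) t := by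
    intro j
    induction j with
    | zero =>
      intro _ t ht
      simp only [Function.iterate_zero, id_eq, Nat.sub_zero]
      rw [psiChain_pos κ φ hm]
      exact hf t ht
    | succ j ih =>
      intro hj t ht
      have hjm : j ≤ m := by omega
      rw [Function.iterate_succ_apply']
      have hprev : ∀ x > (0:ℝ), (GFD n k)^[j] f x = conv κ (psiChain κ φ (m - (j+1))) x := by
        intro x hx
        rw [ih hjm x hx, show m - j = (m - (j+1)) + 1 by omega]
        exact hΨstep _ x hx
      rw [gfd_congr hprev t ht]
      exact gfd_step _ (hΨcm1 _) t ht
  have right : ∀ j : ℕ, 1 ≤ j → ∀ t > (0:ℝ),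
      conv (convPow k j) (conv (convPow κ j) φ) t = conv (hker ↑(n*j)) φ t := by
    intro j hj
    induction j, hj using Nat.le_induction with
    | base =>
      intro t ht
      rw [convPow_one, convPow_one]
      have hrep : conv k (conv κ φ) t = conv (hker n) φ t := by
        rw [← conv_assoc' hk hκ hφ ht]
        exact conv_congr_left hkκ φ ht
      rw [hrep, show n * 1 = n by ring]
    | succ j hj ih =>
      intro t ht
      have hA : Cm1 (convPow k j) := convPowCm1 k hk j hj
      have hB : Cm1 (convPow κ j) := convPowCm1 κ hκ j hj
      have hBφ : Cm1 (conv (convPow κ j) φ) := conv_cm1 hB hφ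
      have hX : Cm1 (conv (convPow κ (j+1)) φ) :=
        conv_cm1 (convPowCm1 κ hκ _ (by omega)) hφ
      have hnj1 : 1 ≤ n * j := Nat.mul_pos hn (by omega)
      have e1 : conv (convPow k (j+1)) (conv (convPow κ (j+1)) φ) t
          = conv k (conv (convPow k j) (conv (convPow κ (j+1)) φ)) t := by
        rw [convPow_succ' k hj]
        exact conv_assoc' hk hA hX ht
      have e2 : ∀ x > (0:ℝ), conv (convPow k j) (conv (convPow κ (j+1)) φ) x
          = conv κ (conv (convPow k j) (conv (convPow κ j) φ)) x := by
        intro x hx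
        have f1 : conv (convPow k j) (conv (convPow κ (j+1)) φ) x
            = conv (convPow k j) (conv κ (conv (convPow κ j) φ)) x := by
          apply conv_congr_right _ (fun y hy => ?_) hx
          rw [convPow_succ' κ hj]
          exact conv_assoc' hκ hB hφ hy
        have f2 : conv (convPow k j) (conv κ (conv (convPow κ j) φ)) x
            = conv (conv (convPow k j) κ) (conv (convPow κ j) φ) x :=
          (conv_assoc' hA hκ hBφ hx).symm
        have f3 : conv (conv (convPow k j) κ) (conv (convPow κ j) φ) x
            = conv (conv κ (convPow k j)) (conv (convPow κ j) φ) x := by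
          rw [show conv (convPow k j) κ = conv κ (convPow k j) from funext (conv_comm _ _)]
        have f4 : conv (conv κ (convPow k j)) (conv (convPow κ j) φ) x
            = conv κ (conv (convPow k j) (conv (convPow κ j) φ)) x :=
          conv_assoc' hκ hA hBφ hx
        rw [f1, f2, f3, f4]
      have e3 : conv k (conv (convPow k j) (conv (convPow κ (j+1)) φ)) t
          = conv k (conv κ (conv (convPow k j) (conv (convPow κ j) φ))) t :=
        conv_congr_right k e2 ht
      have e4 : conv k (conv κ (conv (convPow k j) (conv (convPow κ j) φ))) t
          = conv (hker n) (conv (convPow k j) (conv (convPow κ j) φ)) t := by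
        rw [← conv_assoc' hk hκ (conv_cm1 hA hBφ) ht]
        exact conv_congr_left hkκ _ ht
      have e5 : conv (hker n) (conv (convPow k j) (conv (convPow κ j) φ)) t
          = conv (hker n) (conv (hker ↑(n*j)) φ) t :=
        conv_congr_right _ (fun y hy => ih y hy) ht
      have e6 : conv (hker n) (conv (hker ↑(n*j)) φ) t
          = conv (conv (hker n) (hker ↑(n*j))) φ t :=
        (conv_assoc' (hker_cm1_nat hn1) (hker_cm1_nat hnj1) hφ ht).symm
      have e7 : conv (conv (hker n) (hker ↑(n*j))) φ t = conv (hker ↑(n + n*j)) φ t :=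
        conv_congr_left (fun y hy => conv_hker_add hn1 hnj1 y hy) φ ht
      rw [e1, e3, e4, e5, e6, e7, show n + n*j = n*(j+1) by ring]
  intro t ht
  have hL : (GFD n k)^[m] f t = φ t := by
    have hh := left m le_rfl t ht
    rwa [Nat.sub_self] at hh
  have hR : iteratedDeriv (n*m) (conv (convPow k m) f) t = φ t := by
    have hrep : ∀ x > (0:ℝ), conv (convPow k m) f x = conv (hker ↑(n*m)) φ x := by
      intro x hx
      rw [conv_congr_right _ (fun y hy => hf y hy) hx]
      exact right m hm x hx
    rw [iteratedDeriv_congr_Ioi (n*m) hrep t ht]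
    exact iteratedDeriv_conv_hker hφ (Nat.mul_pos hn hm) t ht
  rw [hL, hR]
end
end

section
/- The space C_{-1}(0,∞) is closed under the Laplace convolution: if f, g ∈ C_{-1}(0,∞), then the function (f*g)(t) = ∫_0^t f(t−τ)g(τ)dτ is defined for all t > 0 and belongs to C_{-1}(0,∞). -/
noncomputable section

open MeasureTheory Set intervalIntegral Filter

lemma ae_ne_real (c : ℝ) : ∀ᵐ x : ℝ ∂(MeasureTheory.volume : MeasureTheory.Measure ℝ), x ≠ c := by
  simp [MeasureTheory.ae_iff]

lemma aux_int {p q t : ℝ} (hp : -1 < p) (hq : -1 < q) (ht : 0 < t) :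
    IntervalIntegrable (fun τ => τ ^ q * (t - τ) ^ p) MeasureTheory.volume 0 t := by
  have h1 : IntervalIntegrable (fun τ => τ ^ q * (t - τ) ^ p) volume 0 (t/2) := by
    apply (intervalIntegral.intervalIntegrable_rpow' hq).mul_continuousOn
    apply ContinuousOn.rpow_const (continuousOn_const.sub continuousOn_id)
    intro x hx
    rw [Set.uIcc_of_le (by linarith)] at hx
    left
    have := hx.2
    show t - x ≠ 0
    intro h
    nlinarith [hx.1]
  have h2 : IntervalIntegrable (fun τ => τ ^ q * (t - τ) ^ p) volume (t/2) t := by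
    have base : IntervalIntegrable (fun x : ℝ => x ^ p) volume 0 (t/2) :=
      intervalIntegral.intervalIntegrable_rpow' hp
    have hc := (base.comp_sub_left t).symm
    simp only [sub_zero] at hc
    rw [show t - t/2 = t/2 from by ring] at hc
    apply hc.continuousOn_mul
    apply ContinuousOn.rpow_const continuousOn_id
    intro x hx
    rw [Set.uIcc_of_le (by linarith)] at hx
    left
    have := hx.1
    simp only [id]
    intro h; nlinarith
  exact h1.trans h2

/-- `C_{-1}(0,∞)` is closed under the Laplace convolution; in
particular the convolution integral exists for every `t > 0`. -/
theorem Cm1_closed_under_conv (f g : ℝ → ℝ) (hf : Cm1 f) (hg : Cm1 g) :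
    (∀ t : ℝ, 0 < t →
      IntervalIntegrable (fun τ => f (t - τ) * g τ) MeasureTheory.volume 0 t) ∧
    Cm1 (conv f g) := by
  obtain ⟨p, hp, f₁, hf₁, hfe⟩ := hf
  obtain ⟨q, hq, g₁, hg₁, hge⟩ := hg
  set H : ℝ → ℝ := fun t =>
    ∫ s in (0:ℝ)..1, (s ^ q * (1 - s) ^ p) * (f₁ (t * (1 - s)) * g₁ (t * s)) with hH
  have base1 : IntervalIntegrable (fun s : ℝ => s ^ q * (1 - s) ^ p) volume 0 1 :=
    aux_int hp hq one_pos
  -- key: integrability and value, for each t > 0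
  have key : ∀ t : ℝ, 0 < t →
      IntervalIntegrable (fun τ => f (t - τ) * g τ) volume 0 t ∧
      conv f g t = t ^ (p + q + 1) * H t := by
    intro t ht
    set G : ℝ → ℝ := fun τ => (τ ^ q * (t - τ) ^ p) * (f₁ (t - τ) * g₁ τ) with hG
    have hGint : IntervalIntegrable G volume 0 t := by
      apply (aux_int hp hq ht).mul_continuousOn
      rw [Set.uIcc_of_le ht.le]
      apply ContinuousOn.mul
      · apply hf₁.comp (continuousOn_const.sub continuousOn_id)
        intro x hx
        simp only [id, Set.mem_Ici]
        exact sub_nonneg.2 hx.2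
      · apply hg₁.mono
        intro x hx
        exact hx.1
    have hae : (fun τ => f (t - τ) * g τ) =ᵐ[volume.restrict (Set.uIoc 0 t)] G := by
      rw [Set.uIoc_of_le ht.le]
      have h1 : ∀ᵐ τ : ℝ ∂volume.restrict (Set.Ioc 0 t), τ ≠ t :=
ae_restrict_of_ae (ae_ne_real t)
      have h2 : ∀ᵐ τ : ℝ ∂volume.restrict (Set.Ioc 0 t), τ ∈ Set.Ioc 0 t :=
        ae_restrict_mem measurableSet_Ioc
      filter_upwards [h1, h2] with τ hτ1 hτ2
      have ht1 : 0 < t - τ := by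
        rcases lt_or_eq_of_le (sub_nonneg.2 hτ2.2) with h | h
        · exact h
        · exact absurd (by linarith : τ = t) hτ1
      rw [hfe _ ht1, hge _ hτ2.1, hG]
      ring
    have hint : IntervalIntegrable (fun τ => f (t - τ) * g τ) volume 0 t := by
      rw [intervalIntegrable_iff] at hGint ⊢
      exact hGint.congr hae.symm
    refine ⟨hint, ?_⟩
    have e1 : conv f g t = ∫ τ in (0:ℝ)..t, G τ := by
      exact intervalIntegral.integral_congr_ae
        ((ae_restrict_iff' measurableSet_uIoc).1 hae)
    have e2 : (t : ℝ) • ∫ s in (0:ℝ)..1, G (t * s) = ∫ τ in (0:ℝ)..t, G τ := by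
      simpa using intervalIntegral.smul_integral_comp_mul_left G t
    have e3 : (∫ s in (0:ℝ)..1, G (t * s))
        = ∫ s in (0:ℝ)..1, t ^ (p + q) *
            ((s ^ q * (1 - s) ^ p) * (f₁ (t * (1 - s)) * g₁ (t * s))) := by
      apply intervalIntegral.integral_congr_ae
      filter_upwards [ae_ne_real 1] with s hs1 hsm
      rw [Set.uIoc_of_le (zero_le_one)] at hsm
      have hs0 : 0 < s := hsm.1
      have hs1' : s < 1 := lt_of_le_of_ne hsm.2 hs1
      have h1s : (0:ℝ) ≤ 1 - s := by linarith
      have e : t - t * s = t * (1 - s) := by ring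
      rw [hG]
      simp only [e]
      rw [Real.mul_rpow ht.le hs0.le, Real.mul_rpow ht.le h1s,
        Real.rpow_add ht]
      ring
    have e4 : (∫ s in (0:ℝ)..1, t ^ (p + q) *
            ((s ^ q * (1 - s) ^ p) * (f₁ (t * (1 - s)) * g₁ (t * s))))
        = t ^ (p + q) * H t := intervalIntegral.integral_const_mul _ _
    rw [e1, ← e2, e3, e4, smul_eq_mul,
      Real.rpow_add ht (p + q) 1, Real.rpow_add ht p q, Real.rpow_one]
    ring
  refine ⟨fun t ht => (key t ht).1, p + q + 1, by linarith, H, ?_, fun t ht => (key t ht).2⟩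
  -- continuity of H on Ici 0
  intro t₀ ht₀
  obtain ⟨C₁, hC₁⟩ := (isCompact_Icc (a := (0:ℝ)) (b := t₀ + 1)).exists_bound_of_continuousOn
    (hf₁.mono (Set.Icc_subset_Ici_self))
  obtain ⟨C₂, hC₂⟩ := (isCompact_Icc (a := (0:ℝ)) (b := t₀ + 1)).exists_bound_of_continuousOn
    (hg₁.mono (Set.Icc_subset_Ici_self))
  have hC₁0 : 0 ≤ C₁ := le_trans (norm_nonneg _) (hC₁ 0 (by constructor <;> [rfl; linarith [ht₀.out]]))
  have hC₂0 : 0 ≤ C₂ := le_trans (norm_nonneg _) (hC₂ 0 (by constructor <;> [rfl; linarith [ht₀.out]]))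
  have hmem : ∀ᶠ x in nhdsWithin t₀ (Set.Ici 0), x ∈ Set.Icc 0 (t₀ + 1) := by
    have h1 : ∀ᶠ x in nhdsWithin t₀ (Set.Ici 0), x ∈ Set.Ici (0:ℝ) :=
      eventually_mem_nhdsWithin
    have h2 : ∀ᶠ x in nhdsWithin t₀ (Set.Ici 0), x < t₀ + 1 :=
      eventually_nhdsWithin_of_eventually_nhds (Filter.Tendsto.eventually_lt_const (by linarith)
        Filter.tendsto_id)
    filter_upwards [h1, h2] with x hx1 hx2
    exact ⟨hx1, hx2.le⟩
  apply intervalIntegral.continuousWithinAt_of_dominated_interval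
    (bound := fun s => (s ^ q * (1 - s) ^ p) * (C₁ * C₂))
  · filter_upwards [hmem] with x hx
    apply AEStronglyMeasurable.mul
    · rw [Set.uIoc_of_le zero_le_one]
      exact (base1.1).aestronglyMeasurable
    · have hc : ContinuousOn (fun s : ℝ => f₁ (x * (1 - s)) * g₁ (x * s)) (Set.Icc 0 1) := by
        apply ContinuousOn.mul
        · apply hf₁.comp ((continuous_const.mul (continuous_const.sub continuous_id)).continuousOn)
          intro s hs
          exact mul_nonneg hx.1 (by simp; linarith [hs.2])
        · apply hg₁.comp ((continuous_const.mul continuous_id).continuousOn)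
          intro s hs
          exact mul_nonneg hx.1 hs.1
      rw [Set.uIoc_of_le zero_le_one]
      exact (hc.mono Set.Ioc_subset_Icc_self).aestronglyMeasurable measurableSet_Ioc
  · filter_upwards [hmem] with x hx
    refine Filter.Eventually.of_forall fun s hs => ?_
    rw [Set.uIoc_of_le zero_le_one] at hs
    have hs0 : 0 < s := hs.1
    have h1s : (0:ℝ) ≤ 1 - s := by linarith [hs.2]
    have hb0 : 0 ≤ s ^ q * (1 - s) ^ p :=
      mul_nonneg (Real.rpow_nonneg hs0.le _) (Real.rpow_nonneg h1s _)
    rw [norm_mul, Real.norm_of_nonneg hb0]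
    apply mul_le_mul_of_nonneg_left _ hb0
    rw [norm_mul]
    apply mul_le_mul
    · apply hC₁
      constructor
      · exact mul_nonneg hx.1 h1s
      · calc x * (1 - s) ≤ x * 1 := by
              apply mul_le_mul_of_nonneg_left (by linarith) hx.1
          _ ≤ t₀ + 1 := by linarith [hx.2]
    · apply hC₂
      constructor
      · exact mul_nonneg hx.1 hs0.le
      · calc x * s ≤ x * 1 := mul_le_mul_of_nonneg_left hs.2 hx.1
          _ ≤ t₀ + 1 := by linarith [hx.2]
    · exact norm_nonneg _
    · exact hC₁0
  · exact base1.mul_const _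
  · filter_upwards [ae_ne_real 1] with s hs1
    intro hsm
    rw [Set.uIoc_of_le zero_le_one] at hsm
    have hs0 : 0 < s := hsm.1
    have hs1' : s < 1 := lt_of_le_of_ne hsm.2 hs1
    apply ContinuousWithinAt.mul continuousWithinAt_const
    apply ContinuousWithinAt.mul
    · exact ContinuousWithinAt.comp (hf₁ _ (mul_nonneg ht₀.out (by linarith)))
        (((continuous_id.mul continuous_const).continuousWithinAt :
          ContinuousWithinAt (fun x : ℝ => x * (1 - s)) (Set.Ici 0) t₀))
        (fun x hx => mul_nonneg hx (sub_nonneg.2 hs1'.le))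
    · exact ContinuousWithinAt.comp (hg₁ _ (mul_nonneg ht₀.out hs0.le))
        (((continuous_id.mul continuous_const).continuousWithinAt :
          ContinuousWithinAt (fun x : ℝ => x * s) (Set.Ici 0) t₀))
        (fun x hx => mul_nonneg hx hs0.le)
end
end

section
/- Let n ∈ ℕ, α ∈ (n−1, n), λ ∈ ℂ, and 0 ≤ i ≤ n−1. Then for all t > 0 the i-th derivative of the function t ↦ t^{α−1} E_{α,α}(λ t^α) is given by (d^i/dt^i)[ t^{α−1} E_{α,α}(λ t^α) ] = t^{α−1−i} E_{α,α−i}(λ t^α). -/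
noncomputable section

open Filter Topology

/-- The two-parameter Mittag-Leffler function `E_{α,β}(z) = Σ_j z^j/Γ(αj+β)`
(with `1/Γ` extended by `0` at the poles, as in Mathlib's `Complex.Gamma`). -/
def mittagLeffler (α β z : ℂ) : ℂ := ∑' j : ℕ, z ^ j / Complex.Gamma (α * j + β)

lemma aux_summable {α : ℝ} (hα : 1 < α) {b : ℝ} (hb : 0 < b) {c : ℝ} (hc : 0 < c) :
    Summable (fun j : ℕ => c ^ j / Real.Gamma (α * j + b)) := by
  have hx : ∀ j : ℕ, 0 < α * j + b := fun j => by positivity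
  have hxtop : Tendsto (fun j : ℕ => α * j + b) atTop atTop := by
    apply tendsto_atTop_add_const_right
    exact (tendsto_natCast_atTop_atTop (R := ℝ)).const_mul_atTop (by linarith)
  apply summable_of_ratio_test_tendsto_lt_one (l := 0) zero_lt_one
  · filter_upwards with j
    exact div_ne_zero (pow_ne_zero _ hc.ne') (Real.Gamma_pos_of_pos (hx j)).ne'
  · apply squeeze_zero'
    · filter_upwards with j
      positivity
    · filter_upwards [hxtop.eventually_ge_atTop 2] with j hj
      have hΓj : 0 < Real.Gamma (α * j + b) := Real.Gamma_pos_of_pos (hx j)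
      have hΓj1 : 0 < Real.Gamma (α * ((j:ℝ)+1) + b) := by
        have := hx (j+1); push_cast at this; exact Real.Gamma_pos_of_pos this
      have key : (α * j + b) * Real.Gamma (α * j + b) ≤ Real.Gamma (α * ((j:ℝ)+1) + b) := by
        rw [← Real.Gamma_add_one (hx j).ne']
        have h1 : (2:ℝ) ≤ α * j + b + 1 := by linarith
        have h2 : α * j + b + 1 ≤ α * (j+1) + b := by push_cast; nlinarith
        exact Real.Gamma_strictMonoOn_Ici.monotoneOn h1 (le_trans h1 h2) h2
      have hterm : ‖c ^ (j+1) / Real.Gamma (α * ((j:ℝ)+1) + b)‖ / ‖c ^ j / Real.Gamma (α * j + b)‖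
          ≤ c / (α * j + b) := by
        rw [norm_div, norm_div, norm_pow, norm_pow, Real.norm_eq_abs, Real.norm_eq_abs,
          Real.norm_eq_abs, abs_of_pos hc, abs_of_pos hΓj, abs_of_pos hΓj1]
        have heq : c ^ (j+1) / Real.Gamma (α * ((j:ℝ)+1) + b) / (c ^ j / Real.Gamma (α * j + b))
            = c * Real.Gamma (α * j + b) / Real.Gamma (α * ((j:ℝ)+1) + b) := by
          field_simp
          ring
        rw [heq, div_le_div_iff₀ hΓj1 (hx j)]
        nlinarith [key, hc.le]
      convert hterm using 3
      · rfl
      · push_cast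
        ring
    · exact Tendsto.div_atTop tendsto_const_nhds hxtop



def MLterm (lam : ℂ) (α b : ℝ) (j : ℕ) (s : ℝ) : ℂ :=
  lam ^ j / Complex.Gamma (↑(α * j + b)) * ((s ^ (α * j + b - 1) : ℝ) : ℂ)

lemma mittagLeffler_eq_tsum (lam : ℂ) {α : ℝ} (hα : 0 < α) (b : ℝ) {t : ℝ} (ht : 0 < t) :
    ((t ^ (b - 1) : ℝ) : ℂ) * mittagLeffler α b (lam * ((t ^ α : ℝ) : ℂ)) =
      ∑' j : ℕ, MLterm lam α b j t := by
  unfold mittagLeffler MLterm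
  rw [← tsum_mul_left]
  congr 1
  funext j
  have h1 : ((α : ℂ) * j + b) = ((α * j + b : ℝ) : ℂ) := by push_cast; ring
  have h2 : ((t ^ α : ℝ) : ℂ) ^ j = ((t ^ (α * j) : ℝ) : ℂ) := by
    rw [← Complex.ofReal_pow, ← Real.rpow_natCast (t ^ α) j, ← Real.rpow_mul ht.le]
  have h3 : (t : ℝ) ^ (b - 1) * t ^ (α * j) = t ^ (α * j + b - 1) := by
    rw [← Real.rpow_add ht]; ring_nf
  rw [h1, mul_pow, h2, ← h3]
  push_cast
  ring

lemma hasDerivAt_MLterm (lam : ℂ) {α b : ℝ} (hα : 0 ≤ α) (hb : 1 < b) (j : ℕ) {s : ℝ}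
    (hs : 0 < s) : HasDerivAt (MLterm lam α b j) (MLterm lam α (b - 1) j s) s := by
  have hαj : (0:ℝ) ≤ α * j := mul_nonneg hα j.cast_nonneg
  have he : 0 < α * j + b - 1 := by linarith
  have h := ((Real.hasDerivAt_rpow_const (x := s) (p := α * j + b - 1)
    (Or.inl hs.ne')).ofReal_comp).const_mul (lam ^ j / Complex.Gamma (↑(α * j + b)))
  convert h using 1
  case e'_4 => rfl
  case e'_8 => rfl
  unfold MLterm
  have hsplit : ((α * j + b : ℝ) : ℂ) = ((α * j + b - 1 : ℝ) : ℂ) + 1 := by push_cast; ring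
  have hne : ((α * j + b - 1 : ℝ) : ℂ) ≠ 0 := by
    exact_mod_cast he.ne'
  rw [hsplit, Complex.Gamma_add_one _ hne]
  have hΓ : Complex.Gamma ((α * j + b - 1 : ℝ) : ℂ) ≠ 0 := by
    rw [Complex.Gamma_ofReal]
    exact_mod_cast (Real.Gamma_pos_of_pos he).ne'
  have hexp : α * j + (b - 1) - 1 = α * j + b - 1 - 1 := by ring
  have harg : ((α * j + (b - 1) : ℝ) : ℂ) = ((α * j + b - 1 : ℝ) : ℂ) := by norm_cast; ring
  rw [hexp, harg, Complex.ofReal_mul]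
  have hne' : ((α * j + b - 1 : ℝ) : ℂ) * Complex.Gamma ((α * j + b - 1 : ℝ) : ℂ) ≠ 0 :=
    mul_ne_zero hne hΓ
  rw [div_mul_eq_mul_div, div_mul_eq_mul_div, div_eq_div_iff hΓ hne']
  ring

lemma norm_MLterm (lam : ℂ) {α b : ℝ} {j : ℕ} (hpos : 0 < α * j + b) {s : ℝ} (hs : 0 < s) :
    ‖MLterm lam α b j s‖ = ‖lam‖ ^ j * s ^ (α * j + b - 1) / Real.Gamma (α * j + b) := by
  unfold MLterm
  rw [Complex.Gamma_ofReal, norm_mul, norm_div, norm_pow, Complex.norm_real, Complex.norm_real,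
    Real.norm_eq_abs, Real.norm_eq_abs, abs_of_pos (Real.Gamma_pos_of_pos hpos),
    abs_of_pos (Real.rpow_pos_of_pos hs _), div_mul_eq_mul_div]

lemma hasDerivAt_tsum_MLterm (lam : ℂ) {α b : ℝ} (hα : 1 < α) (hb : 1 < b) {t : ℝ}
    (ht : 0 < t) :
    HasDerivAt (fun s => ∑' j : ℕ, MLterm lam α b j s) (∑' j : ℕ, MLterm lam α (b - 1) j t)
      t := by
  have hα0 : (0:ℝ) < α := by linarith
  have hl1 : (0:ℝ) < ‖lam‖ + 1 := by positivity
  set c : ℝ := (‖lam‖ + 1) * (t * 2) ^ α with hc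
  have hcpos : 0 < c := by positivity
  set M : ℝ := max ((t / 2) ^ (b - 2)) ((t * 2) ^ (b - 2)) with hM
  have hcj : ∀ j : ℕ, c ^ j = (‖lam‖ + 1) ^ j * (t * 2) ^ (α * j) := by
    intro j
    rw [hc, mul_pow, ← Real.rpow_natCast ((t*2) ^ α) j, ← Real.rpow_mul (by positivity)]
  have hBpos : ∀ j : ℕ, (0:ℝ) < α * j + (b - 1) := by
    intro j
    have := mul_nonneg hα0.le j.cast_nonneg
    linarith
  have hApos : ∀ j : ℕ, (0:ℝ) < α * j + b := by
    intro j
    have := mul_nonneg hα0.le j.cast_nonneg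
    linarith
  refine hasDerivAt_tsum_of_isPreconnected
    (u := fun j : ℕ => M * (c ^ j / Real.Gamma (α * j + (b - 1))))
    (((aux_summable hα (by linarith : (0:ℝ) < b - 1) hcpos).mul_left M))
    (isOpen_Ioo (a := t/2) (b := t*2)) isPreconnected_Ioo
    (fun j y hy => hasDerivAt_MLterm lam hα0.le hb j ((by positivity : (0:ℝ) < t/2).trans hy.1))
    (fun j y hy => ?_) (y₀ := t) ?_ ?_ ?_
  · -- derivative bound
    have hy0 : (0:ℝ) < y := (by positivity : (0:ℝ) < t/2).trans hy.1
    beta_reduce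
    rw [norm_MLterm lam (hBpos j) hy0]
    have hsplit : α * j + (b - 1) - 1 = α * j + (b - 2) := by ring
    rw [hsplit, Real.rpow_add hy0, hcj j]
    have h1 : ‖lam‖ ^ j ≤ (‖lam‖ + 1) ^ j := pow_le_pow_left₀ (norm_nonneg _) (by linarith) j
    have h2 : y ^ (α * j) ≤ (t * 2) ^ (α * j) :=
      Real.rpow_le_rpow hy0.le hy.2.le (by positivity)
    have h3 : y ^ (b - 2) ≤ M := by
      rcases le_or_gt 0 (b - 2) with h | h
      · exact le_max_of_le_right (Real.rpow_le_rpow hy0.le hy.2.le h)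
      · exact le_max_of_le_left (Real.rpow_le_rpow_of_nonpos (by positivity) hy.1.le h.le)
    calc ‖lam‖ ^ j * (y ^ (α * j) * y ^ (b - 2)) / Real.Gamma (α * j + (b - 1))
        ≤ (‖lam‖ + 1) ^ j * ((t * 2) ^ (α * j) * M) / Real.Gamma (α * j + (b - 1)) := by
          gcongr <;> first
            | exact Real.Gamma_pos_of_pos (hBpos j)
            | exact (Real.Gamma_pos_of_pos (hBpos j)).le
            | exact h1
            | exact h2
            | exact h3
            | positivity
            | linarith
      _ = M * ((‖lam‖ + 1) ^ j * (t * 2) ^ (α * j) / Real.Gamma (α * j + (b - 1))) := by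
          ring
  · exact Set.mem_Ioo.mpr ⟨by linarith, by linarith⟩
  · -- summability at t
    apply Summable.of_norm_bounded
      (g := fun j : ℕ => t ^ (b - 1) * (((‖lam‖ + 1) * t ^ α) ^ j / Real.Gamma (α * j + b)))
      ((aux_summable hα (by linarith : (0:ℝ) < b) (by positivity)).mul_left _)
    intro j
    beta_reduce
    rw [norm_MLterm lam (hApos j) ht]
    have hsplit : α * j + b - 1 = α * j + (b - 1) := by ring
    rw [hsplit, Real.rpow_add ht]
    have hcj' : ((‖lam‖ + 1) * t ^ α) ^ j = (‖lam‖ + 1) ^ j * t ^ (α * j) := by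
      rw [mul_pow, ← Real.rpow_natCast (t ^ α) j, ← Real.rpow_mul ht.le]
    rw [hcj']
    have h1 : ‖lam‖ ^ j ≤ (‖lam‖ + 1) ^ j := pow_le_pow_left₀ (norm_nonneg _) (by linarith) j
    calc ‖lam‖ ^ j * (t ^ (α * j) * t ^ (b - 1)) / Real.Gamma (α * j + b)
        ≤ (‖lam‖ + 1) ^ j * (t ^ (α * j) * t ^ (b - 1)) / Real.Gamma (α * j + b) := by
          gcongr <;> first
            | exact Real.Gamma_pos_of_pos (hApos j)
            | exact (Real.Gamma_pos_of_pos (hApos j)).le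
            | exact h1
            | positivity
            | linarith
      _ = t ^ (b - 1) * ((‖lam‖ + 1) ^ j * t ^ (α * j) / Real.Gamma (α * j + b)) := by ring
  · exact Set.mem_Ioo.mpr ⟨by linarith, by linarith⟩

/-- for `n ∈ ℕ`, `α ∈ (n-1,n)`, `λ ∈ ℂ` and `0 ≤ i ≤ n-1`, for all
`t > 0`,
`(d^i/dt^i)[t^{α-1} E_{α,α}(λ t^α)] = t^{α-1-i} E_{α,α-i}(λ t^α)`. -/
theorem iteratedDeriv_mittagLeffler (n : ℕ) (hn : 0 < n) (α : ℝ)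
    (hα₁ : (n : ℝ) - 1 < α) (hα₂ : α < n) (lam : ℂ) (i : ℕ) (hi : i ≤ n - 1) :
    ∀ t : ℝ, 0 < t →
      iteratedDeriv i
        (fun s : ℝ => ((s ^ (α - 1) : ℝ) : ℂ) *
          mittagLeffler α α (lam * ((s ^ α : ℝ) : ℂ))) t =
      ((t ^ (α - 1 - i) : ℝ) : ℂ) *
        mittagLeffler α ((α : ℂ) - (i : ℂ)) (lam * ((t ^ α : ℝ) : ℂ)) := by
  have hα0 : (0:ℝ) < α := by
    have : (1:ℝ) ≤ n := by exact_mod_cast hn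
    linarith
  set f : ℝ → ℂ := fun s : ℝ => ((s ^ (α - 1) : ℝ) : ℂ) *
    mittagLeffler α α (lam * ((s ^ α : ℝ) : ℂ)) with hf
  have key : ∀ m : ℕ, m ≤ n - 1 → ∀ t : ℝ, 0 < t →
      iteratedDeriv m f t = ∑' j : ℕ, MLterm lam α (α - m) j t := by
    intro m
    induction m with
    | zero =>
      intro _ t ht
      rw [iteratedDeriv_zero, hf]
      have := mittagLeffler_eq_tsum lam hα0 α ht
      simpa using this
    | succ m IH =>
      intro hm t ht
      have hm' : m ≤ n - 1 := Nat.le_of_succ_le hm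
      have hmn : m + 2 ≤ n := by omega
      have hmn' : (m:ℝ) + 2 ≤ (n:ℝ) := by exact_mod_cast hmn
      have hα1 : (1:ℝ) < α := by linarith
      have hb : (1:ℝ) < α - m := by linarith
      rw [iteratedDeriv_succ]
      have hev : iteratedDeriv m f =ᶠ[nhds t] fun s => ∑' j : ℕ, MLterm lam α (α - m) j s := by
        filter_upwards [isOpen_Ioi.mem_nhds (Set.mem_Ioi.mpr ht)] with s hs
        exact IH hm' s hs
      rw [hev.deriv_eq, (hasDerivAt_tsum_MLterm lam hα1 hb ht).deriv]
      have : α - (m:ℝ) - 1 = α - ((m+1 : ℕ) : ℝ) := by push_cast; ring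
      rw [this]
  intro t ht
  rw [key i hi t ht]
  have h1 : ((α:ℂ) - (i:ℂ)) = ((α - (i:ℝ) : ℝ) : ℂ) := by push_cast; ring
  have h2 : α - 1 - (i:ℝ) = (α - (i:ℝ)) - 1 := by ring
  rw [h1, h2, mittagLeffler_eq_tsum lam hα0 (α - (i:ℝ)) ht]
end
end

section
/- Let n ∈ ℕ and f ∈ C_{-1}(0,∞). Then the function g(t) = ({1}^{<n>} * f)(t) = (h_n * f)(t) = ∫_0^t (t−τ)^{n-1}/(n−1)! f(τ) dτ belongs to C^{n-1}([0,∞)) (it extends to an (n−1)-times continuously differentiable function on [0,∞)), and g(0) = g'(0) = ⋯ = g^{(n-1)}(0) = 0. -/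
noncomputable section

section HnAuxSection

open Set MeasureTheory intervalIntegral Finset Filter Topology

namespace HnAux

def Fj (f : ℝ → ℝ) (j : ℕ) (t : ℝ) : ℝ := ∫ τ in (0:ℝ)..t, τ ^ j * f τ

def phi (q : ℝ) (f₁ : ℝ → ℝ) (j : ℕ) (t : ℝ) : ℝ := t ^ ((j : ℝ) + q) * f₁ t

def coefa (m k : ℕ) : ℝ := (-1) ^ (k + (m - 1)) * ((m - 1).choose k : ℝ) / (Nat.factorial (m - 1) : ℝ)

def Ssum (f : ℝ → ℝ) (m : ℕ) (t : ℝ) : ℝ :=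
  ∑ k ∈ Finset.range m, coefa m k * (t ^ k * Fj f (m - 1 - k) t)

variable {q : ℝ} {f f₁ : ℝ → ℝ}

lemma jq_pos {j : ℕ} (hq : -1 < q) (hj : 1 ≤ j) : (0:ℝ) < (j : ℝ) + q := by
  have : (1:ℝ) ≤ (j:ℝ) := by exact_mod_cast hj
  linarith

lemma phi_continuousOn (hq : -1 < q) (hf₁ : ContinuousOn f₁ (Ici 0)) {j : ℕ} (hj : 1 ≤ j) :
    ContinuousOn (phi q f₁ j) (Ici 0) := by
  apply ContinuousOn.mul _ hf₁
  intro x _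
  exact (Real.continuousAt_rpow_const x _ (Or.inr (jq_pos hq hj).le)).continuousWithinAt

lemma phi_integrable (hq : -1 < q) (hf₁ : ContinuousOn f₁ (Ici 0)) (j : ℕ) {t : ℝ}
    (ht : 0 ≤ t) : IntervalIntegrable (phi q f₁ j) volume 0 t := by
  have hq' : (-1:ℝ) < (j : ℝ) + q := by
    have : (0:ℝ) ≤ (j:ℝ) := Nat.cast_nonneg j
    linarith
  refine (intervalIntegrable_rpow' hq').mul_continuousOn (hf₁.mono ?_)
  rw [uIcc_of_le ht]
  exact Icc_subset_Ici_self

lemma phi_eq_pos (hff : ∀ t : ℝ, 0 < t → f t = t ^ q * f₁ t) (j : ℕ) {t : ℝ} (ht : 0 < t) :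
    phi q f₁ j t = t ^ j * f t := by
  rw [phi, hff t ht, Real.rpow_add ht, ← mul_assoc, Real.rpow_natCast]

lemma integrand_integrable (hq : -1 < q) (hf₁ : ContinuousOn f₁ (Ici 0))
    (hff : ∀ t : ℝ, 0 < t → f t = t ^ q * f₁ t) (j : ℕ) {t : ℝ} (ht : 0 ≤ t) :
    IntervalIntegrable (fun τ => τ ^ j * f τ) volume 0 t := by
  rw [intervalIntegrable_iff_integrableOn_Ioc_of_le ht]
  have h1 := phi_integrable hq hf₁ j ht (f₁ := f₁)
  rw [intervalIntegrable_iff_integrableOn_Ioc_of_le ht] at h1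
  exact h1.congr_fun (fun τ hτ => phi_eq_pos hff j hτ.1) measurableSet_Ioc

lemma Fj_eq (hq : -1 < q) (hf₁ : ContinuousOn f₁ (Ici 0))
    (hff : ∀ t : ℝ, 0 < t → f t = t ^ q * f₁ t) (j : ℕ) {t : ℝ} (ht : 0 ≤ t) :
    Fj f j t = ∫ τ in (0:ℝ)..t, phi q f₁ j τ := by
  rw [Fj, integral_of_le ht, integral_of_le ht]
  exact setIntegral_congr_fun measurableSet_Ioc (fun τ hτ => (phi_eq_pos hff j hτ.1).symm)

lemma Fj_zero (j : ℕ) : Fj f j 0 = 0 := integral_same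

lemma Fj_cwa (hq : -1 < q) (hf₁ : ContinuousOn f₁ (Ici 0))
    (hff : ∀ t : ℝ, 0 < t → f t = t ^ q * f₁ t) (j : ℕ) {t : ℝ} (ht : 0 ≤ t) :
    ContinuousWithinAt (Fj f j) (Ici 0) t := by
  have h1 : ContinuousWithinAt (Fj f j) (Icc 0 (t + 1)) t := by
    apply continuousWithinAt_primitive (measure_singleton t)
    rw [min_self, max_eq_right (by linarith)]
    exact integrand_integrable hq hf₁ hff j (by linarith)
  apply h1.mono_of_mem_nhdsWithin
  rw [← Ici_inter_Iic]
  exact Filter.inter_mem self_mem_nhdsWithin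
    (mem_nhdsWithin_of_mem_nhds (Iic_mem_nhds (lt_add_one t)))

lemma integrand_contOn (hq : -1 < q) (hf₁ : ContinuousOn f₁ (Ici 0))
    (hff : ∀ t : ℝ, 0 < t → f t = t ^ q * f₁ t) (j : ℕ) :
    ContinuousOn (fun τ => τ ^ j * f τ) (Ioi 0) := by
  have h1 : ContinuousOn (phi q f₁ j) (Ioi 0) := by
    apply ContinuousOn.mul
    · intro x hx
      exact (Real.continuousAt_rpow_const x _ (Or.inl (ne_of_gt hx))).continuousWithinAt
    · exact hf₁.mono Ioi_subset_Ici_self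
  exact h1.congr fun τ hτ => (phi_eq_pos hff j hτ).symm

lemma Fj_hasDerivAt_pos (hq : -1 < q) (hf₁ : ContinuousOn f₁ (Ici 0))
    (hff : ∀ t : ℝ, 0 < t → f t = t ^ q * f₁ t) (j : ℕ) {t : ℝ} (ht : 0 < t) :
    HasDerivAt (Fj f j) (t ^ j * f t) t := by
  unfold Fj
  exact integral_hasDerivAt_right (integrand_integrable hq hf₁ hff j ht.le)
    ((integrand_contOn hq hf₁ hff j).stronglyMeasurableAtFilter isOpen_Ioi t ht)
    ((integrand_contOn hq hf₁ hff j).continuousAt (Ioi_mem_nhds ht))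

lemma phi_zero (hq : -1 < q) {j : ℕ} (hj : 1 ≤ j) : phi q f₁ j 0 = 0 := by
  rw [phi, Real.zero_rpow (ne_of_gt (jq_pos hq hj)), zero_mul]

lemma Fj_hasDerivWithinAt (hq : -1 < q) (hf₁ : ContinuousOn f₁ (Ici 0))
    (hff : ∀ t : ℝ, 0 < t → f t = t ^ q * f₁ t) {j : ℕ} (hj : 1 ≤ j) {t : ℝ} (ht : 0 ≤ t) :
    HasDerivWithinAt (Fj f j) (phi q f₁ j t) (Ici 0) t := by
  rcases ht.lt_or_eq with ht' | ht'
  · rw [phi_eq_pos hff j ht']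
    exact (Fj_hasDerivAt_pos hq hf₁ hff j ht').hasDerivWithinAt
  · subst ht'
    have key : HasDerivWithinAt (fun u => ∫ x in (0:ℝ)..u, phi q f₁ j x)
        (phi q f₁ j 0) (Ici 0) 0 := by
      apply integral_hasDerivWithinAt_right (t := Ioi (0:ℝ))
        (phi_integrable hq hf₁ j le_rfl)
        ((phi_continuousOn hq hf₁ hj).mono Ioi_subset_Ici_self
          |>.stronglyMeasurableAtFilter_nhdsWithin measurableSet_Ioi 0)
        (((phi_continuousOn hq hf₁ hj) 0 self_mem_Ici).mono Ioi_subset_Ici_self)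
    apply key.congr (fun x hx => Fj_eq hq hf₁ hff j hx) (Fj_eq hq hf₁ hff j le_rfl)

lemma Ssum_zero (m : ℕ) : Ssum f m 0 = 0 := by
  apply Finset.sum_eq_zero
  intro k _
  rw [Fj_zero, mul_zero, mul_zero]

lemma coefa_succ (m k : ℕ) (hm : 2 ≤ m) : coefa m (k + 1) * (k + 1 : ℝ) = coefa (m - 1) k := by
  obtain ⟨M, rfl⟩ : ∃ M, m = M + 2 := ⟨m - 2, by omega⟩
  have hc : (((M + 1).choose (k + 1) : ℕ) : ℝ) * ((k : ℝ) + 1) = ((M : ℝ) + 1) * ((M.choose k : ℕ) : ℝ) := by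
    have := (Nat.add_one_mul_choose_eq M k).symm
    have h' : (((M + 1).choose (k + 1) * (k + 1) : ℕ) : ℝ) = ((Nat.succ M * M.choose k : ℕ) : ℝ) := by
      exact_mod_cast congrArg (Nat.cast : ℕ → ℝ) this
    push_cast at h'
    linarith [h']
  simp only [coefa, show M + 2 - 1 = M + 1 from rfl, show M + 1 - 1 = M from rfl]
  have h2 : (-1:ℝ) ^ (k + 1 + (M + 1)) = (-1:ℝ) ^ (k + M) := by
    rw [show k + 1 + (M + 1) = k + M + 2 by ring, pow_add]
    norm_num
  rw [h2, Nat.factorial_succ]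
  have hM : ((M:ℝ) + 1) ≠ 0 := by positivity
  have hMf : ((Nat.factorial M : ℕ) : ℝ) ≠ 0 := by
    exact_mod_cast (Nat.factorial_pos M).ne'
  push_cast
  rw [div_mul_eq_mul_div, div_eq_div_iff (by positivity) hMf]
  linear_combination ((-1:ℝ) ^ (k + M)) * (Nat.factorial M : ℝ) * hc

lemma sum_pow_zero (m : ℕ) (hm : 2 ≤ m) (t c : ℝ) :
    ∑ k ∈ range m, coefa m k * (t ^ k * (t ^ (m - 1 - k) * c)) = 0 := by
  have h := sub_pow t t (m - 1)
  rw [sub_self, zero_pow (by omega), show m - 1 + 1 = m by omega] at h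
  have : ∑ k ∈ range m, coefa m k * (t ^ k * (t ^ (m - 1 - k) * c)) =
      (∑ k ∈ range m, (-1:ℝ) ^ (k + (m - 1)) * t ^ k * t ^ (m - 1 - k) * ((m-1).choose k : ℝ))
        * (c / (Nat.factorial (m - 1) : ℝ)) := by
    rw [Finset.sum_mul]
    apply Finset.sum_congr rfl
    intro k _
    rw [coefa]
    ring
  rw [this, ← h, zero_mul]

lemma alg (m : ℕ) (hm : 2 ≤ m) (t c : ℝ) (u : ℕ → ℝ) :
    ∑ k ∈ range m, coefa m k * ((k * t ^ (k - 1)) * u (m - 1 - k) + t ^ k * (t ^ (m - 1 - k) * c))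
      = ∑ k ∈ range (m - 1), coefa (m - 1) k * (t ^ k * u (m - 1 - 1 - k)) := by
  have hsplit : ∀ k ∈ range m,
      coefa m k * ((k * t ^ (k - 1)) * u (m - 1 - k) + t ^ k * (t ^ (m - 1 - k) * c)) =
      coefa m k * ((k * t ^ (k - 1)) * u (m - 1 - k)) + coefa m k * (t ^ k * (t ^ (m - 1 - k) * c)) := by
    intro k _; ring
  rw [Finset.sum_congr rfl hsplit, Finset.sum_add_distrib, sum_pow_zero m hm t c, add_zero]
  rw [show m = (m - 1) + 1 by omega, Finset.sum_range_succ']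
  simp only [Nat.cast_zero, zero_mul, mul_zero, zero_add, zero_mul, add_zero]
  rw [show (m - 1) + 1 - 1 = m - 1 by omega]
  apply Finset.sum_congr rfl
  intro k hk
  have h1 : coefa ((m-1)+1) (k+1) * ((k:ℝ) + 1) = coefa (m - 1) k := by
    have := coefa_succ m k hm
    rw [show m = m - 1 + 1 by omega] at this
    push_cast at this ⊢
    exact this
  rw [show m - 1 - (k + 1) = m - 1 - 1 - k by omega, show k + 1 - 1 = k from rfl]
  push_cast
  linear_combination (t ^ k * u (m - 1 - 1 - k)) * h1

lemma Ssum_hasDeriv (hq : -1 < q) (hf₁ : ContinuousOn f₁ (Ici 0))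
    (hff : ∀ t : ℝ, 0 < t → f t = t ^ q * f₁ t) (m : ℕ) (hm : 2 ≤ m) {t : ℝ} (ht : 0 ≤ t) :
    HasDerivWithinAt (Ssum f m) (Ssum f (m - 1) t) (Ici 0) t := by
  rcases ht.lt_or_eq with ht' | ht'
  · -- t > 0
    have hterm : ∀ k ∈ range m, HasDerivWithinAt
        (fun s => coefa m k * (s ^ k * Fj f (m - 1 - k) s))
        (coefa m k * ((k * t ^ (k - 1)) * Fj f (m - 1 - k) t +
          t ^ k * (t ^ (m - 1 - k) * f t))) (Ici 0) t := by
      intro k _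
      exact ((hasDerivAt_pow k t).hasDerivWithinAt.mul
        (Fj_hasDerivAt_pos hq hf₁ hff (m - 1 - k) ht').hasDerivWithinAt).const_mul _
    have hsum := HasDerivWithinAt.fun_sum hterm
    rw [alg m hm t (f t) (fun j => Fj f j t)] at hsum
    exact hsum.congr (fun x _ => rfl) rfl
  · -- t = 0
    subst ht'
    rw [Ssum_zero]
    have hterm : ∀ k ∈ range m, HasDerivWithinAt
        (fun s => coefa m k * (s ^ k * Fj f (m - 1 - k) s)) 0 (Ici 0) 0 := by
      intro k hk
      rcases Nat.lt_or_ge k (m - 1) with hkm | hkm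
      · -- j = m - 1 - k ≥ 1
        have hj : 1 ≤ m - 1 - k := by omega
        have := ((hasDerivAt_pow k (0:ℝ)).hasDerivWithinAt.mul
          (Fj_hasDerivWithinAt hq hf₁ hff hj (le_refl (0:ℝ)))).const_mul (coefa m k)
        have hval : coefa m k * ((k * (0:ℝ) ^ (k - 1)) * Fj f (m - 1 - k) 0 +
            (0:ℝ) ^ k * phi q f₁ (m - 1 - k) 0) = 0 := by
          rw [Fj_zero, phi_zero hq hj, mul_zero, mul_zero, add_zero, mul_zero]
        rwa [hval] at this
      · -- k = m - 1, j = 0 term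
        have hk' : k = m - 1 := by
          simp only [Finset.mem_range] at hk; omega
        subst hk'
        rw [hasDerivWithinAt_iff_tendsto_slope]
        set g : ℝ → ℝ := fun s => coefa m (m-1) * (s ^ (m-1) * Fj f (m - 1 - (m-1)) s) with hg
        have hcont : ContinuousWithinAt
            (fun x => coefa m (m-1) * (x ^ (m - 1 - 1) * Fj f (m - 1 - (m-1)) x)) (Ici 0) 0 :=
          continuousWithinAt_const.mul
            ((continuousWithinAt_id.pow _).mul (Fj_cwa hq hf₁ hff _ le_rfl))
        have hzero : coefa m (m-1) * ((0:ℝ) ^ (m - 1 - 1) * Fj f (m - 1 - (m-1)) 0) = 0 := by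
          rw [Fj_zero, mul_zero, mul_zero]
        have htend : Filter.Tendsto
            (fun x => coefa m (m-1) * (x ^ (m - 1 - 1) * Fj f (m - 1 - (m-1)) x))
            (𝓝[(Ici (0:ℝ)) \ {0}] 0) (𝓝 0) := by
          have h' := (hcont.mono (diff_subset (t := {0}))).tendsto
          rwa [hzero] at h'
        apply htend.congr'
        filter_upwards [self_mem_nhdsWithin] with x hx
        obtain ⟨hx0, hxne⟩ := hx
        have hxne' : x ≠ 0 := by simpa using hxne
        rw [slope_def_field, hg]
        simp only []
        rw [Fj_zero, show m - 1 = (m - 1 - 1) + 1 by omega, pow_succ]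
        field_simp
        ring_nf
        rw [show 1 + (m - 1 - 1) - 1 = m - 1 - 1 by omega]
    have := HasDerivWithinAt.fun_sum hterm
    simp only [Finset.sum_const_zero] at this
    exact this


lemma hker_eq {n : ℕ} (hn : 1 ≤ n) (x : ℝ) :
    hker n x = x ^ (n - 1) / (Nat.factorial (n - 1) : ℝ) := by
  unfold hker
  rw [show ((n:ℝ) - 1) = ((n - 1 : ℕ) : ℝ) by
      rw [Nat.cast_sub hn, Nat.cast_one], Real.rpow_natCast]
  congr 1
  rw [show (n:ℝ) = ((n - 1 : ℕ) : ℝ) + 1 by rw [Nat.cast_sub hn, Nat.cast_one]; ring]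
  exact Real.Gamma_nat_eq_factorial (n - 1)

lemma conv_eq_Ssum (hq : -1 < q) (hf₁ : ContinuousOn f₁ (Ici 0))
    (hff : ∀ t : ℝ, 0 < t → f t = t ^ q * f₁ t) {n : ℕ} (hn : 1 ≤ n) {t : ℝ} (ht : 0 ≤ t) :
    conv (hker n) f t = Ssum f n t := by
  have key : ∀ τ : ℝ, hker n (t - τ) * f τ
      = ∑ k ∈ range n, (coefa n k * t ^ k) * (τ ^ (n - 1 - k) * f τ) := by
    intro τ
    rw [hker_eq hn, sub_pow t τ (n - 1), show (n - 1) + 1 = n by omega, Finset.sum_div,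
      Finset.sum_mul]
    apply Finset.sum_congr rfl
    intro k _
    rw [coefa]
    ring
  unfold conv
  rw [intervalIntegral.integral_congr (fun τ _ => key τ),
    intervalIntegral.integral_finset_sum]
  · unfold Ssum Fj
    apply Finset.sum_congr rfl
    intro k _
    rw [intervalIntegral.integral_const_mul]
    ring
  · intro k _
    exact (integrand_integrable hq hf₁ hff _ ht).const_mul _

lemma Ssum_contDiffOn (hq : -1 < q) (hf₁ : ContinuousOn f₁ (Ici 0))
    (hff : ∀ t : ℝ, 0 < t → f t = t ^ q * f₁ t) :
    ∀ m : ℕ, 1 ≤ m → ContDiffOn ℝ (m - 1 : ℕ) (Ssum f m) (Ici 0) := by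
  intro m
  induction m with
  | zero => omega
  | succ m IH =>
    intro _
    by_cases hm : m = 0
    · subst hm
      rw [show ((0 + 1 - 1 : ℕ) : WithTop ℕ∞) = 0 from rfl, contDiffOn_zero]
      have hco : ContinuousOn (fun t : ℝ => coefa 1 0 * (t ^ 0 * Fj f 0 t)) (Ici 0) :=
        fun x hx => continuousWithinAt_const.mul
          ((continuousWithinAt_id.pow 0).mul (Fj_cwa hq hf₁ hff 0 hx))
      apply hco.congr
      intro t _
      simp [Ssum]
    · have hm1 : 1 ≤ m := by omega
      have hc : ((m + 1 - 1 : ℕ) : WithTop ℕ∞) = ((m - 1 : ℕ) : WithTop ℕ∞) + 1 := by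
        rw [show m + 1 - 1 = (m - 1) + 1 by omega]
        push_cast
        rfl
      rw [hc, contDiffOn_succ_iff_derivWithin (uniqueDiffOn_Ici 0)]
      refine ⟨fun x hx =>
        (Ssum_hasDeriv hq hf₁ hff (m + 1) (by omega) hx).differentiableWithinAt, ?_, ?_⟩
      · intro hω
        exact absurd hω (by simp)
      · apply (IH hm1).congr
        intro x hx
        have := (Ssum_hasDeriv hq hf₁ hff (m + 1) (by omega) hx).derivWithin
          ((uniqueDiffOn_Ici 0) x hx)
        rw [this, show m + 1 - 1 = m from rfl]

lemma Ssum_iter (hq : -1 < q) (hf₁ : ContinuousOn f₁ (Ici 0))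
    (hff : ∀ t : ℝ, 0 < t → f t = t ^ q * f₁ t) :
    ∀ i m : ℕ, i < m →
      Set.EqOn (iteratedDerivWithin i (Ssum f m) (Ici 0)) (Ssum f (m - i)) (Ici 0) := by
  intro i
  induction i with
  | zero => intro m _ x hx; simp
  | succ i IH =>
    intro m hm x hx
    rw [iteratedDerivWithin_succ,
      derivWithin_congr (IH m (by omega)) (IH m (by omega) hx),
      (Ssum_hasDeriv hq hf₁ hff (m - i) (by omega) hx).derivWithin
        ((uniqueDiffOn_Ici 0) x hx),
      show m - i - 1 = m - (i + 1) by omega]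

end HnAux

end HnAuxSection

/-- for `f ∈ C_{-1}(0,∞)`, the function
`g = h_n * f = {1}^{<n>} * f` is `(n-1)`-times continuously differentiable on
`[0,∞)` and `g(0) = g'(0) = ⋯ = g^{(n-1)}(0) = 0`. -/
theorem hn_conv_smoothness (n : ℕ) (hn : 0 < n) (f : ℝ → ℝ) (hf : Cm1 f) :
    ContDiffOn ℝ (n - 1 : ℕ) (conv (hker n) f) (Set.Ici 0) ∧
      ∀ i : ℕ, i ≤ n - 1 →
        iteratedDerivWithin i (conv (hker n) f) (Set.Ici 0) 0 = 0 := by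
  obtain ⟨q, hq, f₁, hf₁, hff⟩ := hf
  have hn1 : 1 ≤ n := hn
  have hA : Set.EqOn (conv (hker n) f) (HnAux.Ssum f n) (Set.Ici 0) :=
    fun t ht => HnAux.conv_eq_Ssum hq hf₁ hff hn1 ht
  constructor
  · exact (HnAux.Ssum_contDiffOn hq hf₁ hff n hn1).congr hA
  · intro i hi
    have hin : i < n := by omega
    have h1 := iteratedDerivWithin_congr (n := i) hA
    rw [h1 Set.self_mem_Ici, HnAux.Ssum_iter hq hf₁ hff i n hin Set.self_mem_Ici,
      HnAux.Ssum_zero]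
end
end
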